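/- arXiv:2002.06014 — 3 statements merged into one kernel-verified Lean document; each statement's English description precedes it below -/
import Mathlib

section
/- In a maximal outerplanar graph of order n ≥ 3, each vertex has at most two neighbors of degree 2. -/
namespace MopPaper

/-- Cyclic successor on `Fin n`. -/
def finNext {n : ℕ} (i : Fin n) : Fin n := ⟨(i.val + 1) % n, Nat.mod_lt _ i.pos⟩

/-- A witness that `G` is a maximal outerplanar graph (mop): a cyclic ordering
`σ` of the vertices such that all Hamiltonian (boundary) edges are present,
no two edges cross with respect to the cyclic order (outerplanarity),
and `G` has exactly `2n - 3` edges (edge-maximality, i.e. a triangulation). -/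
def MopWitness {V : Type*} (G : SimpleGraph V) (n : ℕ) (σ : Fin n ≃ V) : Prop :=
  (∀ i : Fin n, G.Adj (σ i) (σ (finNext i))) ∧
  (∀ a b c d : Fin n, G.Adj (σ a) (σ b) → G.Adj (σ c) (σ d) →
      ¬ (a < c ∧ c < b ∧ b < d)) ∧
  Nat.card G.edgeSet = 2 * n - 3

/-- `G` is a maximal outerplanar graph (on at least 3 vertices). -/
def IsMop {V : Type*} (G : SimpleGraph V) : Prop :=
  ∃ n : ℕ, 3 ≤ n ∧ ∃ σ : Fin n ≃ V, MopWitness G n σ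

/-- `uv` is a Hamiltonian edge of the mop `G`: an edge lying on the (unique)
Hamiltonian cycle of `G`. -/
def IsHamEdge {V : Type*} (G : SimpleGraph V) (u v : V) : Prop :=
  ∃ n : ℕ, 3 ≤ n ∧ ∃ σ : Fin n ≃ V, MopWitness G n σ ∧
    ∃ i : Fin n, (σ i = u ∧ σ (finNext i) = v) ∨ (σ i = v ∧ σ (finNext i) = u)

/-- The closed neighborhood `N[S]` of a set of vertices. -/
def closedNbhd {V : Type*} (G : SimpleGraph V) (S : Set V) : Set V :=
  S ∪ {v | ∃ u ∈ S, G.Adj u v}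

/-- The set of vertices of degree 2. -/
def deg2set {V : Type*} (G : SimpleGraph V) : Set V :=
  {v | (G.neighborSet v).ncard = 2}

/-- `S` is a `K_{1,k+1}`-isolating set of `G`: every vertex of `G - N[S]`
has at most `k` neighbors in `G - N[S]`. -/
def IsKIsolating {V : Type*} (G : SimpleGraph V) (k : ℕ) (S : Set V) : Prop :=
  ∀ v ∈ (closedNbhd G S)ᶜ, (G.neighborSet v ∩ (closedNbhd G S)ᶜ).ncard ≤ k

/-- The `K_{1,k+1}`-isolation number `ι_k(G)`. -/
noncomputable def iotaK {V : Type*} (G : SimpleGraph V) (k : ℕ) : ℕ :=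
  sInf {m | ∃ S : Set V, S.Finite ∧ IsKIsolating G k S ∧ S.ncard = m}

/-- `S` is an `H`-isolating set of `G`: the graph `G - N[S]` contains no
subgraph isomorphic to `H`. -/
def IsIsolating {V W : Type*} (G : SimpleGraph V) (H : SimpleGraph W) (S : Set V) : Prop :=
  ¬ ∃ f : W → ((closedNbhd G S)ᶜ : Set V), Function.Injective f ∧
      ∀ a b : W, H.Adj a b → G.Adj (f a).1 (f b).1

/-- The `H`-isolation number `ι(G, H)`. -/
noncomputable def isolationNumber {V W : Type*} (G : SimpleGraph V) (H : SimpleGraph W) : ℕ :=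
  sInf {m | ∃ S : Set V, S.Finite ∧ IsIsolating G H S ∧ S.ncard = m}

/-- The domination number `γ(G)`. -/
noncomputable def dominationNumber {V : Type*} (G : SimpleGraph V) : ℕ :=
  sInf {m | ∃ S : Set V, S.Finite ∧ closedNbhd G S = Set.univ ∧ S.ncard = m}



/-- Cyclic predecessor on `Fin n`. -/
def finPrev {n : ℕ} (i : Fin n) : Fin n := ⟨(i.val + (n - 1)) % n, Nat.mod_lt _ i.pos⟩

lemma finNext_finPrev {n : ℕ} (i : Fin n) : finNext (finPrev i) = i := by
  have h := i.pos
  have h2 := i.isLt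
  simp only [finNext, finPrev]
  ext
  simp only
  rw [Nat.mod_add_mod]
  have : i.val + (n - 1) + 1 = i.val + n := by omega
  rw [this, Nat.add_mod_right, Nat.mod_eq_of_lt h2]

lemma finPrev_finNext {n : ℕ} (i : Fin n) : finPrev (finNext i) = i := by
  have h := i.pos
  have h2 := i.isLt
  simp only [finNext, finPrev]
  ext
  simp only
  rw [Nat.mod_add_mod]
  have : ↑i + 1 + (n - 1) = i.val + n := by omega
  rw [this, Nat.add_mod_right, Nat.mod_eq_of_lt h2]

lemma finPrev_ne_finNext {n : ℕ} (hn : 3 ≤ n) (i : Fin n) : finPrev i ≠ finNext i := by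
  intro h
  have h2 := i.isLt
  have e : (i.val + (n - 1)) % n = (i.val + 1) % n := congrArg Fin.val h
  have e2 : (i.val + 1 + (n - 2)) % n = (i.val + 1 + 0) % n := by
    rw [show i.val + 1 + (n - 2) = i.val + (n - 1) from by omega, e, Nat.add_zero]
  have hm : (n - 2) % n = 0 % n := Nat.ModEq.add_left_cancel' _ e2
  have hd : n ∣ n - 2 := Nat.dvd_of_mod_eq_zero (by simpa using hm)
  have := Nat.le_of_dvd (by omega) hd
  omega

/-- in a mop, every vertex has at most two neighbors of degree 2. -/
theorem deg2_neighbors_le_two {V : Type*} (G : SimpleGraph V) (hG : IsMop G) :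
    ∀ v : V, (G.neighborSet v ∩ deg2set G).ncard ≤ 2 := by
  intro v
  obtain ⟨n, hn, σ, hcyc, -, -⟩ := hG
  set i : Fin n := σ.symm v with hi
  have hv : σ i = v := σ.apply_symm_apply v
  have key : G.neighborSet v ∩ deg2set G ⊆ {σ (finPrev i), σ (finNext i)} := by
    rintro u ⟨hadj, hdeg⟩
    have hdeg2 : (G.neighborSet u).ncard = 2 := hdeg
    set j : Fin n := σ.symm u with hj
    have hu : σ j = u := σ.apply_symm_apply u
    have hne : σ (finPrev j) ≠ σ (finNext j) :=
      fun h => finPrev_ne_finNext hn j (σ.injective h)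
    have hsub : {σ (finPrev j), σ (finNext j)} ⊆ G.neighborSet u := by
      rintro x (rfl | rfl)
      · have := hcyc (finPrev j)
        rw [finNext_finPrev, hu] at this
        exact this.symm
      · have := hcyc j
        rw [hu] at this
        exact this
    have hpair : ({σ (finPrev j), σ (finNext j)} : Set V).ncard = 2 :=
      Set.ncard_pair hne
    have hfin : (G.neighborSet u).Finite := by
      by_contra hinf
      rw [Set.Infinite.ncard hinf] at hdeg2
      exact two_ne_zero hdeg2.symm
    have heq : {σ (finPrev j), σ (finNext j)} = G.neighborSet u :=
      Set.eq_of_subset_of_ncard_le hsub (by rw [hpair]; exact le_of_eq hdeg2) hfin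
    have hvmem : v ∈ G.neighborSet u := hadj.symm
    rw [← heq] at hvmem
    rcases hvmem with h | h
    · have hij : i = finPrev j := σ.injective (by rw [hv, h])
      have huu : u = σ (finNext i) := by
        rw [← hu, show j = finNext i from by rw [hij, finNext_finPrev]]
      rw [huu]
      exact Set.mem_insert_of_mem _ rfl
    · have hij : i = finNext j := σ.injective (by rw [hv, h])
      have huu : u = σ (finPrev i) := by
        rw [← hu, show j = finPrev i from by rw [hij, finPrev_finNext]]
      rw [huu]
      exact Set.mem_insert _ _
  calc (G.neighborSet v ∩ deg2set G).ncard
      ≤ ({σ (finPrev i), σ (finNext i)} : Set V).ncard :=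
        Set.ncard_le_ncard key (Set.toFinite _)
    _ ≤ 2 := (Set.ncard_insert_le _ _).trans (by simp [Set.ncard_singleton])


end MopPaper
end

section
/- If G is a triangulation of a simple polygon of order at least 4, e is a Hamiltonian edge of G (an edge on the polygon boundary), and G' is the graph obtained from G by contracting the edge e, then G' is a triangulation of some simple polygon; equivalently, the edge contraction of a maximal outerplanar graph of order at least 4 along a Hamiltonian edge is again a maximal outerplanar graph. -/
namespace MopPaper

/-- non-crossing predicate for a graph on `Fin m`. -/
def NC {m : ℕ} (H : SimpleGraph (Fin m)) : Prop :=
  ∀ a b c d : Fin m, H.Adj a b → H.Adj c d → ¬ (a < c ∧ c < b ∧ b < d)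

lemma exists_small (m : ℕ) (hm : 3 ≤ m) (H : SimpleGraph (Fin m)) (hnc : NC H) :
    ∃ x s t : Fin m, H.neighborSet x ⊆ {s, t} := by
  classical
  by_cases hDne : ({z : ℕ | ∃ p q : Fin m, H.Adj p q ∧ p.val + 2 ≤ q.val ∧
      ¬(p.val = 0 ∧ q.val = m - 1) ∧ q.val - p.val = z}).Nonempty
  · obtain ⟨p, q, hpq, hd2, hne0, hz⟩ := Nat.sInf_mem hDne
    have hmin : ∀ p' q' : Fin m, H.Adj p' q' → p'.val + 2 ≤ q'.val →
        ¬(p'.val = 0 ∧ q'.val = m - 1) → q.val - p.val ≤ q'.val - p'.val := by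
      intro p' q' h1 h2 h3
      rw [hz]
      exact Nat.sInf_le ⟨p', q', h1, h2, h3, rfl⟩
    have hqlt : q.val < m := q.2
    refine ⟨⟨p.val + 1, by omega⟩, p, ⟨p.val + 2, by omega⟩, ?_⟩
    set x : Fin m := ⟨p.val + 1, by omega⟩ with hxdef
    set t : Fin m := ⟨p.val + 2, by omega⟩ with htdef
    have hxv : x.val = p.val + 1 := rfl
    have htv : t.val = p.val + 2 := rfl
    intro y hy
    rw [SimpleGraph.mem_neighborSet] at hy
    rcases Nat.lt_trichotomy y.val p.val with hlt | heq | hgt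
    · exact absurd ⟨Fin.lt_def.mpr (by omega), Fin.lt_def.mpr (by omega),
        Fin.lt_def.mpr (by omega)⟩ (hnc y x p q hy.symm hpq)
    · left
      exact (Fin.ext heq : y = p)
    · rcases Nat.lt_or_ge y.val (p.val + 3) with hsm | hbig
      · rcases Nat.eq_or_lt_of_le hgt with h1 | h2
        · exact absurd (show H.Adj x x from (Fin.ext (by omega) : y = x) ▸ hy) (H.irrefl)
        · right
          exact Set.mem_singleton_iff.mpr (Fin.ext (by omega))
      · exfalso
        have hych : q.val - p.val ≤ y.val - x.val :=
          hmin x y hy (by omega) (by omega)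
        exact hnc p q x y hpq hy
          ⟨Fin.lt_def.mpr (by omega), Fin.lt_def.mpr (by omega), Fin.lt_def.mpr (by omega)⟩
  · refine ⟨⟨1, by omega⟩, ⟨0, by omega⟩, ⟨2, by omega⟩, ?_⟩
    set x : Fin m := ⟨1, by omega⟩
    set s : Fin m := ⟨0, by omega⟩
    set t : Fin m := ⟨2, by omega⟩
    have hxv : x.val = 1 := rfl
    have hsv : s.val = 0 := rfl
    have htv : t.val = 2 := rfl
    intro y hy
    rw [SimpleGraph.mem_neighborSet] at hy
    rcases Nat.lt_or_ge y.val 3 with hsm | hbig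
    · rcases Nat.lt_trichotomy y.val 1 with h0 | h1 | h2
      · left; exact Fin.ext (by omega)
      · exact absurd (show H.Adj x x from (Fin.ext (by omega) : y = x) ▸ hy) (H.irrefl)
      · right; exact Set.mem_singleton_iff.mpr (Fin.ext (by omega))
    · exact absurd ⟨y.val - 1, x, y, hy, by omega, by omega, by omega⟩ hDne

lemma maxEdges : ∀ (m : ℕ) (H : SimpleGraph (Fin m)), NC H → H.edgeSet.ncard ≤ 2 * m - 3 := by
  intro m
  induction m using Nat.strong_induction_on with
  | _ m IH =>
    intro H hnc
    by_cases hm : m ≤ 2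
    · -- small cases
      rcases Nat.lt_or_ge m 2 with h1 | h2
      · have he : H.edgeSet = ∅ := by
          ext e
          induction e with
          | _ a b =>
            simp only [SimpleGraph.mem_edgeSet, Set.mem_empty_iff_false, iff_false]
            intro hab
            exact H.irrefl (by
              have : a = b := Fin.ext (by have := a.2; have := b.2; omega)
              exact this ▸ hab)
        rw [he]
        simp
      · have hm2 : m = 2 := by omega
        subst hm2
        have hsub : H.edgeSet ⊆ {s(⟨0, by omega⟩, ⟨1, by omega⟩)} := by
          intro e he
          induction e with
          | _ a b =>
            rw [SimpleGraph.mem_edgeSet] at he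
            have hab : a ≠ b := H.ne_of_adj he
            have : a.val ≠ b.val := fun h => hab (Fin.ext h)
            have ha := a.2; have hb := b.2
            rcases Nat.lt_or_ge a.val b.val with h | h
            · have h0 : a = (⟨0, by omega⟩ : Fin 2) := Fin.ext (show a.val = 0 by omega)
              have hb2 : b = (⟨1, by omega⟩ : Fin 2) := Fin.ext (show b.val = 1 by omega)
              simp [h0, hb2]
            · have h1 : a = (⟨1, by omega⟩ : Fin 2) := Fin.ext (show a.val = 1 by omega)
              have hb2 : b = (⟨0, by omega⟩ : Fin 2) := Fin.ext (show b.val = 0 by omega)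
              simp [h1, hb2, Sym2.eq_swap]
        calc H.edgeSet.ncard ≤ ({s((⟨0, by omega⟩ : Fin 2), (⟨1, by omega⟩ : Fin 2))} : Set _).ncard :=
              Set.ncard_le_ncard hsub (Set.toFinite _)
          _ = 1 := Set.ncard_singleton _
          _ ≤ 2 * 2 - 3 := by omega
    · -- main case: m ≥ 3
      push_neg at hm
      obtain ⟨k, rfl⟩ : ∃ k, m = k + 1 := ⟨m - 1, by omega⟩
      obtain ⟨x, s, t, hsub⟩ := exists_small (k+1) (by omega) H hnc
      set H' : SimpleGraph (Fin k) := SimpleGraph.comap x.succAbove H with hH'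
      have hnc' : NC H' := by
        intro a b c d h1 h2 ⟨o1, o2, o3⟩
        exact hnc _ _ _ _ h1 h2
          ⟨(Fin.succAbove_lt_succAbove_iff).mpr o1, (Fin.succAbove_lt_succAbove_iff).mpr o2,
           (Fin.succAbove_lt_succAbove_iff).mpr o3⟩
      have hincl : H.edgeSet ⊆ (Sym2.map x.succAbove '' H'.edgeSet) ∪
          ((fun y => s(x, y)) '' (H.neighborSet x)) := by
        intro e he
        induction e with
        | _ a b =>
          rw [SimpleGraph.mem_edgeSet] at he
          by_cases ha : a = x
          · right
            exact ⟨b, by rw [SimpleGraph.mem_neighborSet]; exact ha ▸ he, by rw [ha]⟩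
          · by_cases hb : b = x
            · right
              refine ⟨a, by rw [SimpleGraph.mem_neighborSet]; exact hb ▸ he.symm, ?_⟩
              simp only
              rw [hb, Sym2.eq_swap]
            · left
              obtain ⟨a', ha'⟩ := Fin.exists_succAbove_eq ha
              obtain ⟨b', hb'⟩ := Fin.exists_succAbove_eq hb
              refine ⟨s(a', b'), ?_, ?_⟩
              · rw [SimpleGraph.mem_edgeSet]
                show H.Adj (x.succAbove a') (x.succAbove b')
                rw [ha', hb']; exact he
              · rw [Sym2.map_pair_eq, ha', hb']
      have hnb : (H.neighborSet x).ncard ≤ 2 := by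
        calc (H.neighborSet x).ncard ≤ ({s, t} : Set (Fin (k+1))).ncard :=
              Set.ncard_le_ncard hsub (Set.toFinite _)
          _ ≤ ({t} : Set (Fin (k+1))).ncard + 1 := Set.ncard_insert_le _ _
          _ ≤ 2 := by rw [Set.ncard_singleton]
      have hIH : H'.edgeSet.ncard ≤ 2 * k - 3 := IH k (by omega) H' hnc'
      calc H.edgeSet.ncard
          ≤ ((Sym2.map x.succAbove '' H'.edgeSet) ∪
              ((fun y => s(x, y)) '' (H.neighborSet x))).ncard :=
            Set.ncard_le_ncard hincl (Set.toFinite _)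
        _ ≤ (Sym2.map x.succAbove '' H'.edgeSet).ncard +
              ((fun y => s(x, y)) '' (H.neighborSet x)).ncard := Set.ncard_union_le _ _
        _ ≤ H'.edgeSet.ncard + (H.neighborSet x).ncard := by
            gcongr <;> exact Set.ncard_image_le (Set.toFinite _)
        _ ≤ (2 * k - 3) + 2 := by gcongr
        _ ≤ 2 * (k + 1) - 3 := by omega

lemma finNext_eq_add_one {n : ℕ} [NeZero n] (hn : 2 ≤ n) (i : Fin n) : finNext i = i + 1 := by
  apply Fin.ext
  show (i.val + 1) % n = (i.val + (1 : Fin n).val) % n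
  have h1 : (1 : Fin n).val = 1 := by
    rw [Fin.val_one']
    exact Nat.mod_eq_of_lt (by omega)
  rw [h1]

lemma mod_cases {n z : ℕ} (h : z < 2 * n) (hn : 0 < n) :
    (z < n ∧ z % n = z) ∨ (n ≤ z ∧ z % n = z - n) := by
  rcases Nat.lt_or_ge z n with h1 | h2
  · exact Or.inl ⟨h1, Nat.mod_eq_of_lt h1⟩
  · refine Or.inr ⟨h2, ?_⟩
    rw [Nat.mod_eq_sub_mod h2, Nat.mod_eq_of_lt (by omega)]

lemma rot {V : Type*} (G : SimpleGraph V) (n : ℕ) [NeZero n] (hn : 3 ≤ n) (σ : Fin n ≃ V)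
    (h : MopWitness G n σ) (t : Fin n) :
    MopWitness G n ((Equiv.addRight t).trans σ) := by
  obtain ⟨hbd, hcr, hcard⟩ := h
  refine ⟨?_, ?_, hcard⟩
  · intro i
    show G.Adj (σ (i + t)) (σ (finNext i + t))
    have : finNext i + t = finNext (i + t) := by
      rw [finNext_eq_add_one (by omega), finNext_eq_add_one (by omega)]
      abel
    rw [this]
    exact hbd (i + t)
  · intro a b c d h1 h2 ⟨o1, o2, o3⟩
    replace h1 : G.Adj (σ (a + t)) (σ (b + t)) := h1
    replace h2 : G.Adj (σ (c + t)) (σ (d + t)) := h2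
    have hva : (a + t).val = (a.val + t.val) % n := Fin.val_add _ _
    have hvb : (b + t).val = (b.val + t.val) % n := Fin.val_add _ _
    have hvc : (c + t).val = (c.val + t.val) % n := Fin.val_add _ _
    have hvd : (d + t).val = (d.val + t.val) % n := Fin.val_add _ _
    have ha2 := a.2; have hb2 := b.2; have hc2 := c.2; have hd2 := d.2; have ht2 := t.2
    have hab : a.val < c.val := o1
    have hcb : c.val < b.val := o2
    have hbd' : b.val < d.val := o3
    rcases mod_cases (show a.val + t.val < 2 * n by omega) (by omega) with ⟨wa, ea⟩ | ⟨wa, ea⟩ <;>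
    rcases mod_cases (show c.val + t.val < 2 * n by omega) (by omega) with ⟨wc, ec⟩ | ⟨wc, ec⟩ <;>
    rcases mod_cases (show b.val + t.val < 2 * n by omega) (by omega) with ⟨wb, eb⟩ | ⟨wb, eb⟩ <;>
    rcases mod_cases (show d.val + t.val < 2 * n by omega) (by omega) with ⟨wd, ed⟩ | ⟨wd, ed⟩ <;>
    first
      | omega
      | (exact hcr _ _ _ _ h1 h2 ⟨Fin.lt_def.mpr (by omega), Fin.lt_def.mpr (by omega),
            Fin.lt_def.mpr (by omega)⟩)
      | (exact hcr _ _ _ _ h1 h2.symm ⟨Fin.lt_def.mpr (by omega), Fin.lt_def.mpr (by omega),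
            Fin.lt_def.mpr (by omega)⟩)
      | (exact hcr _ _ _ _ h1.symm h2 ⟨Fin.lt_def.mpr (by omega), Fin.lt_def.mpr (by omega),
            Fin.lt_def.mpr (by omega)⟩)
      | (exact hcr _ _ _ _ h1.symm h2.symm ⟨Fin.lt_def.mpr (by omega), Fin.lt_def.mpr (by omega),
            Fin.lt_def.mpr (by omega)⟩)
      | (exact hcr _ _ _ _ h2 h1 ⟨Fin.lt_def.mpr (by omega), Fin.lt_def.mpr (by omega),
            Fin.lt_def.mpr (by omega)⟩)
      | (exact hcr _ _ _ _ h2 h1.symm ⟨Fin.lt_def.mpr (by omega), Fin.lt_def.mpr (by omega),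
            Fin.lt_def.mpr (by omega)⟩)
      | (exact hcr _ _ _ _ h2.symm h1 ⟨Fin.lt_def.mpr (by omega), Fin.lt_def.mpr (by omega),
            Fin.lt_def.mpr (by omega)⟩)
      | (exact hcr _ _ _ _ h2.symm h1.symm ⟨Fin.lt_def.mpr (by omega), Fin.lt_def.mpr (by omega),
            Fin.lt_def.mpr (by omega)⟩)

/-- The edge contraction of `G` along `uv`, realized on the vertex set `V \ {u}`
with `v` playing the role of the merged vertex: the merged vertex is adjacent
exactly to the vertices of `N(u) ∪ N(v)` other than `u`, `v`. -/
def contractEdge {V : Type*} (G : SimpleGraph V) (u v : V) :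
    SimpleGraph {x : V // x ≠ u} where
  Adj a b := a ≠ b ∧
    (G.Adj a.1 b.1 ∨ (a.1 = v ∧ G.Adj u b.1) ∨ (b.1 = v ∧ G.Adj u a.1))
  symm := by
    constructor
    rintro a b ⟨hne, h | ⟨h1, h2⟩ | ⟨h1, h2⟩⟩
    · exact ⟨hne.symm, Or.inl h.symm⟩
    · exact ⟨hne.symm, Or.inr (Or.inr ⟨h1, h2⟩)⟩
    · exact ⟨hne.symm, Or.inr (Or.inl ⟨h1, h2⟩)⟩
  loopless := by constructor; rintro a ⟨hne, -⟩; exact hne rfl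

lemma contractEdge_adj {V : Type*} (G : SimpleGraph V) (u v : V) (a b : {x : V // x ≠ u}) :
    (contractEdge G u v).Adj a b ↔ (a ≠ b ∧
      (G.Adj a.1 b.1 ∨ (a.1 = v ∧ G.Adj u b.1) ∨ (b.1 = v ∧ G.Adj u a.1))) := Iff.rfl

lemma main_aux {V : Type*} (G : SimpleGraph V) (n : ℕ) (hn4 : 4 ≤ n) (σ : Fin n ≃ V)
    (hw : MopWitness G n σ) (u v : V)
    (hpos : (σ ⟨n - 2, by omega⟩ = u ∧ σ ⟨n - 1, by omega⟩ = v) ∨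
            (σ ⟨n - 2, by omega⟩ = v ∧ σ ⟨n - 1, by omega⟩ = u)) :
    IsMop (contractEdge G u v) := by
  classical
  haveI : Finite V := Finite.intro σ.symm
  obtain ⟨hbd, hcr, hcard⟩ := hw
  obtain ⟨nm2, hnm2⟩ : ∃ x : Fin n, x.val = n - 2 := ⟨⟨n - 2, by omega⟩, rfl⟩
  obtain ⟨nm1, hnm1⟩ : ∃ x : Fin n, x.val = n - 1 := ⟨⟨n - 1, by omega⟩, rfl⟩
  rw [show (⟨n - 2, by omega⟩ : Fin n) = nm2 from Fin.ext hnm2.symm,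
     show (⟨n - 1, by omega⟩ : Fin n) = nm1 from Fin.ext hnm1.symm] at hpos
  -- boundary edges, concretely
  have hbdv : ∀ (i : ℕ) (h : i + 1 < n), G.Adj (σ ⟨i, by omega⟩) (σ ⟨i + 1, h⟩) := by
    intro i h
    have hx := hbd ⟨i, by omega⟩
    have he : finNext (⟨i, by omega⟩ : Fin n) = ⟨i + 1, h⟩ := by
      apply Fin.ext
      show (i + 1) % n = i + 1
      exact Nat.mod_eq_of_lt h
    rwa [he] at hx
  have hbot : G.Adj (σ nm1) (σ ⟨0, by omega⟩) := by
    have hx := hbd nm1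
    have he : finNext nm1 = ⟨0, by omega⟩ := by
      apply Fin.ext
      show (nm1.val + 1) % n = 0
      rw [hnm1]
      have h9 : n - 1 + 1 = n := by omega
      rw [h9, Nat.mod_self]
    rwa [he] at hx
  obtain ⟨j, j', hju, hjv, hjcase⟩ :
      ∃ j j' : Fin n, σ j = u ∧ σ j' = v ∧
        ((j = nm2 ∧ j' = nm1) ∨ (j = nm1 ∧ j' = nm2)) := by
    rcases hpos with ⟨h1, h2⟩ | ⟨h1, h2⟩
    · exact ⟨nm2, nm1, h1, h2, Or.inl ⟨rfl, rfl⟩⟩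
    · exact ⟨nm1, nm2, h2, h1, Or.inr ⟨rfl, rfl⟩⟩
  have hjvals : (j.val = n - 2 ∧ j'.val = n - 1) ∨ (j.val = n - 1 ∧ j'.val = n - 2) := by
    rcases hjcase with ⟨e1, e2⟩ | ⟨e1, e2⟩ <;> subst e1 <;> subst e2
    · exact Or.inl ⟨hnm2, hnm1⟩
    · exact Or.inr ⟨hnm1, hnm2⟩
  have huv : G.Adj u v := by
    have h := hbdv (n - 2) (by omega)
    have ea : (⟨n - 2, by omega⟩ : Fin n) = nm2 := by
      apply Fin.ext
      show n - 2 = nm2.val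
      omega
    have eb : (⟨n - 2 + 1, by omega⟩ : Fin n) = nm1 := by
      apply Fin.ext
      show n - 2 + 1 = nm1.val
      omega
    rw [ea, eb] at h
    rcases hjcase with ⟨f1, f2⟩ | ⟨f1, f2⟩
    · rw [← f1, ← f2, hju, hjv] at h; exact h
    · rw [← f2, ← f1, hju, hjv] at h; exact h.symm
  have hvu : v ≠ u := (G.ne_of_adj huv).symm
  -- the index embedding
  obtain ⟨ρ, hρ1, hρ2⟩ :
      ∃ ρ : Fin (n - 1) → Fin n, (∀ k : Fin (n - 1), k.val = n - 2 → ρ k = j') ∧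
        (∀ (k : Fin (n - 1)) (h : k.val ≠ n - 2), ρ k = ⟨k.val, by omega⟩) :=
    ⟨fun k => if h : k.val = n - 2 then j' else ⟨k.val, by have := k.2; omega⟩,
      fun k h => dif_pos h, fun k h => dif_neg h⟩
  have hρval : ∀ k : Fin (n - 1), (ρ k).val = if k.val = n - 2 then j'.val else k.val := by
    intro k
    by_cases h : k.val = n - 2
    · rw [hρ1 k h, if_pos h]
    · rw [hρ2 k h, if_neg h]
  have hρj : ∀ k : Fin (n - 1), ρ k ≠ j := by
    intro k h
    have h2 := congrArg Fin.val h
    rw [hρval] at h2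
    have := k.2
    split at h2 <;> omega
  set f : Fin (n - 1) → {x : V // x ≠ u} :=
    (fun k => ⟨σ (ρ k), fun hh => hρj k (σ.injective (hh.trans hju.symm))⟩) with hfdef
  have hf1 : ∀ k : Fin (n - 1), (f k).1 = σ (ρ k) := fun k => rfl
  have hbij : Function.Bijective f := by
    constructor
    · intro k1 k2 h
      have h2 : σ (ρ k1) = σ (ρ k2) := congrArg Subtype.val h
      have h3 := congrArg Fin.val (σ.injective h2)
      rw [hρval, hρval] at h3
      have := k1.2; have := k2.2
      apply Fin.ext
      split at h3 <;> split at h3 <;> omega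
    · rintro ⟨x, hx⟩
      set p := σ.symm x with hp
      have hpx : σ p = x := σ.apply_symm_apply x
      have hpj : p ≠ j := fun h => hx (by rw [← hpx, h, hju])
      by_cases hpj' : p = j'
      · refine ⟨⟨n - 2, by omega⟩, ?_⟩
        apply Subtype.ext
        rw [hf1, hρ1 _ rfl, ← hpj', hpx]
      · have hpv : p.val ≤ n - 3 := by
          have h1 : p.val ≠ j.val := fun h => hpj (Fin.ext h)
          have h2 : p.val ≠ j'.val := fun h => hpj' (Fin.ext h)
          have := p.2
          omega
        refine ⟨⟨p.val, by omega⟩, ?_⟩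
        apply Subtype.ext
        rw [hf1, hρ2 _ (by simp; omega)]
        rw [show (⟨(⟨p.val, by omega⟩ : Fin (n - 1)).val, by have := p.2; omega⟩ : Fin n) = p from
          Fin.ext rfl, hpx]
  -- common neighbours of u and v coincide
  have hboth : ∀ y : V, G.Adj u y → G.Adj v y → G.Adj y (σ nm2) ∧ G.Adj y (σ nm1) := by
    intro y h1 h2
    rcases hjcase with ⟨e1, e2⟩ | ⟨e1, e2⟩
    · have s2 : σ nm2 = u := by rw [← hju, e1]
      have s1 : σ nm1 = v := by rw [← hjv, e2]
      exact ⟨s2 ▸ h1.symm, s1 ▸ h2.symm⟩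
    · have s2 : σ nm2 = v := by rw [← hjv, e2]
      have s1 : σ nm1 = u := by rw [← hju, e1]
      exact ⟨s2 ▸ h2.symm, s1 ▸ h1.symm⟩
  have hcommon : ∀ y z : V, G.Adj u y → G.Adj v y → G.Adj u z → G.Adj v z → y = z := by
    intro y z huy hvy huz hvz
    have hyn : σ.symm y ≠ j := fun h => (G.ne_of_adj huy) (by rw [← hju, ← h, σ.apply_symm_apply])
    have hyn' : σ.symm y ≠ j' := fun h => (G.ne_of_adj hvy) (by rw [← hjv, ← h, σ.apply_symm_apply])
    have hzn : σ.symm z ≠ j := fun h => (G.ne_of_adj huz) (by rw [← hju, ← h, σ.apply_symm_apply])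
    have hzn' : σ.symm z ≠ j' := fun h => (G.ne_of_adj hvz) (by rw [← hjv, ← h, σ.apply_symm_apply])
    have hyv : (σ.symm y).val ≤ n - 3 := by
      have h1 : (σ.symm y).val ≠ j.val := fun h => hyn (Fin.ext h)
      have h2 : (σ.symm y).val ≠ j'.val := fun h => hyn' (Fin.ext h)
      have := (σ.symm y).2
      omega
    have hzv : (σ.symm z).val ≤ n - 3 := by
      have h1 : (σ.symm z).val ≠ j.val := fun h => hzn (Fin.ext h)
      have h2 : (σ.symm z).val ≠ j'.val := fun h => hzn' (Fin.ext h)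
      have := (σ.symm z).2
      omega
    have key : ∀ y z : V, G.Adj u y → G.Adj v y → G.Adj u z → G.Adj v z →
        (σ.symm y).val < (σ.symm z).val → (σ.symm z).val ≤ n - 3 → False := by
      intro y z huy hvy huz hvz hlt hle
      have hy2 := (hboth y huy hvy).1
      have hz1 := (hboth z huz hvz).2
      have cy : G.Adj (σ (σ.symm y)) (σ nm2) := by rw [σ.apply_symm_apply]; exact hy2
      have cz : G.Adj (σ (σ.symm z)) (σ nm1) := by rw [σ.apply_symm_apply]; exact hz1
      exact hcr (σ.symm y) nm2 (σ.symm z) nm1 cy cz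
        ⟨Fin.lt_def.mpr (by omega), Fin.lt_def.mpr (by omega), Fin.lt_def.mpr (by omega)⟩
    rcases Nat.lt_trichotomy (σ.symm y).val (σ.symm z).val with h | h | h
    · exact absurd (key y z huy hvy huz hvz h hzv) (by simp)
    · have : σ.symm y = σ.symm z := Fin.ext h
      rw [← σ.apply_symm_apply y, ← σ.apply_symm_apply z, this]
    · exact absurd (key z y huz hvz huy hvy h hyv) (by simp)
  -- ne helper
  have hfne : ∀ k l : Fin (n - 1), (ρ k).val ≠ (ρ l).val → f k ≠ f l := by
    intro k l hv h
    have h2 := congrArg Subtype.val h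
    rw [hf1, hf1] at h2
    exact hv (congrArg Fin.val (σ.injective h2))
  -- boundary cycle of the contraction
  have hbd' : ∀ k : Fin (n - 1), (contractEdge G u v).Adj (f k) (f (finNext k)) := by
    intro k
    have hk2 := k.2
    rw [contractEdge_adj]
    simp only [hf1]
    by_cases hc1 : k.val + 1 < n - 2
    · have hnext : (finNext k).val = k.val + 1 := by
        show (k.val + 1) % (n - 1) = k.val + 1
        exact Nat.mod_eq_of_lt (by omega)
      have h1v : (ρ k).val = k.val := by rw [hρval, if_neg (by omega)]
      have h2v : (ρ (finNext k)).val = k.val + 1 := by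
        rw [hρval, hnext, if_neg (by omega)]
      have h1 : ρ k = ⟨k.val, by omega⟩ := Fin.ext h1v
      have h2 : ρ (finNext k) = ⟨k.val + 1, by omega⟩ := Fin.ext h2v
      have hadj : G.Adj (σ (ρ k)) (σ (ρ (finNext k))) := by
        convert hbdv k.val (by omega) using 2 <;> first | exact h1 | exact h2
      exact ⟨hfne _ _ (by omega), Or.inl hadj⟩
    · by_cases hc2 : k.val + 1 = n - 2
      · have hnextv : (finNext k).val = n - 2 := by
          show (k.val + 1) % (n - 1) = n - 2
          rw [Nat.mod_eq_of_lt (by omega)]; omega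
        have h2 : ρ (finNext k) = j' := hρ1 _ hnextv
        have h2v : (ρ (finNext k)).val = j'.val := congrArg Fin.val h2
        have h1v : (ρ k).val = k.val := by rw [hρval, if_neg (by omega)]
        have h1 : ρ k = ⟨k.val, by omega⟩ := Fin.ext h1v
        have base : G.Adj (σ ⟨k.val, by omega⟩) (σ ⟨k.val + 1, by omega⟩) := hbdv k.val (by omega)
        refine ⟨hfne _ _ (by omega), ?_⟩
        rcases hjvals with ⟨w1, w2⟩ | ⟨w1, w2⟩
        · -- j at n-2 : merged edge to v
          refine Or.inr (Or.inr ⟨by rw [h2, hjv], ?_⟩)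
          rw [← hju, h1, show j = ⟨k.val + 1, by omega⟩ from Fin.ext (show j.val = k.val + 1 by omega)]
          exact base.symm
        · -- j' at n-2 : plain edge
          refine Or.inl ?_
          rw [h1, h2, show j' = ⟨k.val + 1, by omega⟩ from Fin.ext (show j'.val = k.val + 1 by omega)]
          exact base
      · have hc3 : k.val = n - 2 := by omega
        have hnextv : (finNext k).val = 0 := by
          show (k.val + 1) % (n - 1) = 0
          rw [show k.val + 1 = n - 1 by omega, Nat.mod_self]
        have h1 : ρ k = j' := hρ1 k hc3
        have h1v : (ρ k).val = j'.val := congrArg Fin.val h1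
        have h2 : ρ (finNext k) = ⟨0, by omega⟩ := by
          rw [hρ2 _ (by omega)]
          apply Fin.ext
          show (finNext k).val = 0
          exact hnextv
        have h2v : (ρ (finNext k)).val = 0 := congrArg Fin.val h2
        refine ⟨hfne _ _ (by omega), ?_⟩
        rcases hjvals with ⟨w1, w2⟩ | ⟨w1, w2⟩
        · -- j' at n-1 : plain edge (n-1, 0)
          refine Or.inl ?_
          rw [h1, h2, show j' = nm1 from Fin.ext (show j'.val = nm1.val by omega)]
          exact hbot
        · -- j' at n-2, j at n-1 : merged
          refine Or.inr (Or.inl ⟨by rw [h1, hjv], ?_⟩)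
          rw [← hju, h2, show j = nm1 from Fin.ext (show j.val = nm1.val by omega)]
          exact hbot
  -- non-crossing for the contraction
  have hcr' : ∀ a b c d : Fin (n - 1), (contractEdge G u v).Adj (f a) (f b) →
      (contractEdge G u v).Adj (f c) (f d) → ¬ (a < c ∧ c < b ∧ b < d) := by
    intro a b c d h1 h2 hpat
    obtain ⟨o1, o2, o3⟩ := hpat
    have oa : a.val < c.val := o1
    have ob : c.val < b.val := o2
    have oc : b.val < d.val := o3
    have hd2 := d.2
    have hfv : ∀ k : Fin (n - 1), (f k).1 = v → ρ k = j' := by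
      intro k h
      rw [hf1, ← hjv] at h
      exact σ.injective h
    have hav : (ρ a).val = a.val := by rw [hρval, if_neg (by omega)]
    have hbv : (ρ b).val = b.val := by rw [hρval, if_neg (by omega)]
    have hcv : (ρ c).val = c.val := by rw [hρval, if_neg (by omega)]
    rw [contractEdge_adj] at h1 h2
    have hch1 : G.Adj (σ (ρ a)) (σ (ρ b)) := by
      rcases h1.2 with h | ⟨hva, -⟩ | ⟨hvb, -⟩
      · rw [hf1, hf1] at h; exact h
      · exact absurd (congrArg Fin.val (hfv a hva)) (by omega)
      · exact absurd (congrArg Fin.val (hfv b hvb)) (by omega)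
    obtain ⟨E2, hch2, hE2⟩ : ∃ E2 : Fin n, G.Adj (σ (ρ c)) (σ E2) ∧ b.val < E2.val := by
      rcases h2.2 with h | ⟨hvc, -⟩ | ⟨hvd, had⟩
      · refine ⟨ρ d, by rw [hf1, hf1] at h; exact h, ?_⟩
        rw [hρval]; split <;> omega
      · exact absurd (congrArg Fin.val (hfv c hvc)) (by omega)
      · refine ⟨j, ?_, by omega⟩
        rw [hf1, ← hju] at had
        exact had.symm
    exact hcr (ρ a) (ρ b) (ρ c) E2 hch1 hch2
      ⟨Fin.lt_def.mpr (by omega), Fin.lt_def.mpr (by omega), Fin.lt_def.mpr (by omega)⟩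
  -- counting
  set g : V → {x : V // x ≠ u} := fun x => if h : x = u then ⟨v, hvu⟩ else ⟨x, h⟩ with hgdef
  have hgu : g u = ⟨v, hvu⟩ := dif_pos rfl
  have hgo : ∀ (x : V) (h : x ≠ u), g x = ⟨x, h⟩ := fun x h => dif_neg h
  have hgeq : ∀ p q : V, g p = g q → p = q ∨ (p = u ∧ q = v) ∨ (p = v ∧ q = u) := by
    intro p q h
    by_cases hp : p = u <;> by_cases hq : q = u
    · left; rw [hp, hq]
    · rw [hp, hgu, hgo q hq] at h
      exact Or.inr (Or.inl ⟨hp, (congrArg Subtype.val h).symm⟩)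
    · rw [hq, hgu, hgo p hp] at h
      exact Or.inr (Or.inr ⟨congrArg Subtype.val h, hq⟩)
    · rw [hgo p hp, hgo q hq] at h
      exact Or.inl (congrArg Subtype.val h)
  set S1 : Set (Sym2 V) := G.edgeSet \ {s(u, v)} with hS1def
  have hmap : ∀ e ∈ S1, Sym2.map g e ∈ (contractEdge G u v).edgeSet := by
    intro e
    induction e with
    | _ a b =>
      intro he
      obtain ⟨heE, heP⟩ := he
      rw [SimpleGraph.mem_edgeSet] at heE
      have hePmem : s(a, b) ≠ s(u, v) := fun h => heP (by rw [h]; exact Set.mem_singleton _)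
      rw [Sym2.map_pair_eq, SimpleGraph.mem_edgeSet, contractEdge_adj]
      by_cases ha : a = u
      · subst ha
        have hbu : b ≠ a := fun h => G.irrefl (h ▸ heE)
        have hbv : b ≠ v := fun h => hePmem (by rw [h])
        rw [hgu, hgo b hbu]
        exact ⟨fun h => hbv (congrArg Subtype.val h).symm, Or.inr (Or.inl ⟨rfl, heE⟩)⟩
      · by_cases hb : b = u
        · subst hb
          have hav : a ≠ v := fun h => hePmem (by rw [h, Sym2.eq_swap])
          rw [hgu, hgo a ha]
          exact ⟨fun h => hav (congrArg Subtype.val h), Or.inr (Or.inr ⟨rfl, heE.symm⟩)⟩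
        · rw [hgo a ha, hgo b hb]
          exact ⟨fun h => G.ne_of_adj heE (congrArg Subtype.val h), Or.inl heE⟩
  have hinj : ∀ T : Set (Sym2 V), T ⊆ S1 →
      (∀ y : V, G.Adj u y → G.Adj v y → s(u, y) ∉ T) → Set.InjOn (Sym2.map g) T := by
    intro T hT hC e1 he1 e2 he2 heq
    revert he1 he2 heq
    induction e1, e2 using Sym2.inductionOn₂ with
    | _ a b x y =>
      intro he1 he2 heq
      have h1E : G.Adj a b := (G.mem_edgeSet).mp (hT he1).1
      have h2E : G.Adj x y := (G.mem_edgeSet).mp (hT he2).1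
      rw [Sym2.map_pair_eq, Sym2.map_pair_eq] at heq
      have core : ∀ x y : V, G.Adj x y → s(x, y) ∈ T → g a = g x → g b = g y →
          s(a, b) = s(x, y) := by
        clear h2E he2 heq
        intro x y h2E he2 ea eb
        rcases hgeq _ _ ea with h | ⟨h1, h2⟩ | ⟨h1, h2⟩ <;>
          rcases hgeq _ _ eb with h' | ⟨h1', h2'⟩ | ⟨h1', h2'⟩
        · rw [h, h']
        · exfalso
          rw [h1'] at h1E
          rw [h2', ← h] at h2E
          refine hC a h1E.symm h2E.symm ?_
          have hmem := he1
          rw [h1', Sym2.eq_swap] at hmem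
          exact hmem
        · exfalso
          rw [h2', ← h] at h2E
          rw [h1'] at h1E
          refine hC a h2E.symm h1E.symm ?_
          have hmem := he2
          rw [← h, h2', Sym2.eq_swap] at hmem
          exact hmem
        · exfalso
          rw [h1] at h1E
          rw [h2, ← h'] at h2E
          refine hC b h1E h2E ?_
          have hmem := he1
          rw [h1] at hmem
          exact hmem
        · exfalso
          rw [h1, h1'] at h1E
          exact G.irrefl h1E
        · exfalso
          have hmem := he1
          rw [h1, h1'] at hmem
          exact (hT hmem).2 (Set.mem_singleton _)
        · exfalso
          rw [h2, ← h'] at h2E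
          rw [h1] at h1E
          refine hC b h2E h1E ?_
          have hmem := he2
          rw [h2, ← h'] at hmem
          exact hmem
        · exfalso
          have hmem := he1
          rw [h1, h1', Sym2.eq_swap] at hmem
          exact (hT hmem).2 (Set.mem_singleton _)
        · exfalso
          rw [h1, h1'] at h1E
          exact G.irrefl h1E
      rw [Sym2.eq_iff] at heq
      rcases heq with ⟨ea, eb⟩ | ⟨ea, eb⟩
      · exact core x y h2E he2 ea eb
      · exact (core y x h2E.symm (Sym2.eq_swap ▸ he2) ea eb).trans Sym2.eq_swap
  have hEG : G.edgeSet.ncard = 2 * n - 3 := by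
    rw [← Nat.card_coe_set_eq]; exact hcard
  have hub : (contractEdge G u v).edgeSet.ncard ≤ 2 * (n - 1) - 3 := by
    have hncK : NC (SimpleGraph.comap (⇑(Equiv.ofBijective f hbij)) (contractEdge G u v)) := by
      intro a b c d h1 h2
      exact hcr' a b c d h1 h2
    have hiso : (SimpleGraph.comap (⇑(Equiv.ofBijective f hbij)) (contractEdge G u v)) ≃g
        (contractEdge G u v) := ⟨Equiv.ofBijective f hbij, Iff.rfl⟩
    have hcards : (SimpleGraph.comap (⇑(Equiv.ofBijective f hbij))
        (contractEdge G u v)).edgeSet.ncard = (contractEdge G u v).edgeSet.ncard := by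
      rw [← Nat.card_coe_set_eq, ← Nat.card_coe_set_eq]
      exact Nat.card_congr hiso.mapEdgeSet
    rw [← hcards]
    exact maxEdges (n - 1) _ hncK
  have hcount : Nat.card (contractEdge G u v).edgeSet = 2 * (n - 1) - 3 := by
    by_cases hW : ∃ w : V, G.Adj u w ∧ G.Adj v w
    · obtain ⟨w, huw, hvw⟩ := hW
      have hwu : w ≠ u := fun h => G.irrefl (h ▸ huw)
      have hwv : w ≠ v := fun h => G.irrefl (h ▸ hvw)
      set S : Set (Sym2 V) := G.edgeSet \ {s(u, v), s(u, w)} with hSdef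
      have hSsub : S ⊆ S1 := fun e he => ⟨he.1, fun hm => he.2 (Or.inl hm)⟩
      have hScond : ∀ y : V, G.Adj u y → G.Adj v y → s(u, y) ∉ S := by
        intro y h1 h2 hmem
        have hyw : y = w := hcommon y w h1 h2 huw hvw
        exact hmem.2 (Or.inr (by rw [hyw]; exact Set.mem_singleton _))
      have hplain : ∀ x y : {a : V // a ≠ u}, G.Adj x.1 y.1 →
          s(x, y) ∈ Sym2.map g '' S := by
        intro x y h
        refine ⟨s(x.1, y.1), ⟨(G.mem_edgeSet).mpr h, ?_⟩, ?_⟩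
        · intro hm
          simp only [Set.mem_insert_iff, Set.mem_singleton_iff] at hm
          rcases hm with hm | hm <;> rw [Sym2.eq_iff] at hm <;>
            rcases hm with ⟨h1, h2⟩ | ⟨h1, h2⟩
          · exact x.2 h1
          · exact y.2 h2
          · exact x.2 h1
          · exact y.2 h2
        · rw [Sym2.map_pair_eq, hgo x.1 x.2, hgo y.1 y.2]
      have hmerge : ∀ x y : {a : V // a ≠ u}, x ≠ y → x.1 = v → G.Adj u y.1 →
          s(x, y) ∈ Sym2.map g '' S := by
        intro x y hne hxv hady
        by_cases hpl : G.Adj x.1 y.1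
        · exact hplain x y hpl
        · refine ⟨s(u, y.1), ⟨(G.mem_edgeSet).mpr hady, ?_⟩, ?_⟩
          · intro hm
            simp only [Set.mem_insert_iff, Set.mem_singleton_iff] at hm
            rcases hm with hm | hm <;> rw [Sym2.eq_iff] at hm <;>
              rcases hm with ⟨h1, h2⟩ | ⟨h1, h2⟩
            · exact hne (Subtype.ext (hxv.trans h2.symm))
            · exact G.ne_of_adj huv h1
            · exact hpl (by rw [hxv, h2]; exact hvw)
            · exact hwu h1.symm
          · rw [Sym2.map_pair_eq, hgu, hgo y.1 y.2,
              show (⟨v, hvu⟩ : {x : V // x ≠ u}) = x from Subtype.ext hxv.symm]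
      have himg : (contractEdge G u v).edgeSet = Sym2.map g '' S := by
        apply Set.Subset.antisymm
        · intro e
          induction e with
          | _ x y =>
            intro he
            rw [SimpleGraph.mem_edgeSet, contractEdge_adj] at he
            obtain ⟨hne, hca⟩ := he
            rcases hca with h | ⟨hxv, hady⟩ | ⟨hyv, hadx⟩
            · exact hplain x y h
            · exact hmerge x y hne hxv hady
            · rw [Sym2.eq_swap]
              exact hmerge y x hne.symm hyv hadx
        · rintro e' ⟨e, heS, rfl⟩
          exact hmap e (hSsub heS)
      have hps : ({s(u, v), s(u, w)} : Set (Sym2 V)) ⊆ G.edgeSet := by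
        intro e he
        simp only [Set.mem_insert_iff, Set.mem_singleton_iff] at he
        rcases he with rfl | rfl
        · exact (G.mem_edgeSet).mpr huv
        · exact (G.mem_edgeSet).mpr huw
      have hnepair : s(u, v) ≠ s(u, w) := by
        intro h
        rw [Sym2.eq_iff] at h
        rcases h with ⟨-, h2⟩ | ⟨h1, -⟩
        · exact hwv h2.symm
        · exact hwu h1.symm
      rw [Nat.card_coe_set_eq, himg, Set.ncard_image_of_injOn (hinj S hSsub hScond),
        hSdef, Set.ncard_diff hps (Set.toFinite _), Set.ncard_pair hnepair, hEG]
      omega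
    · push_neg at hW
      have hScond1 : ∀ y : V, G.Adj u y → G.Adj v y → s(u, y) ∉ S1 :=
        fun y h1 h2 _ => hW y h1 h2
      have hsingle : ({s(u, v)} : Set (Sym2 V)) ⊆ G.edgeSet := by
        intro e he
        rw [Set.mem_singleton_iff] at he
        rw [he]
        exact (G.mem_edgeSet).mpr huv
      have hgecalc : S1.ncard ≤ (contractEdge G u v).edgeSet.ncard := by
        rw [← Set.ncard_image_of_injOn (hinj S1 (subset_refl _) hScond1)]
        refine Set.ncard_le_ncard ?_ (Set.toFinite _)
        rintro e' ⟨e, he, rfl⟩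
        exact hmap e he
      have hS1card : S1.ncard = 2 * n - 3 - 1 := by
        rw [hS1def, Set.ncard_diff hsingle (Set.toFinite _), Set.ncard_singleton, hEG]
      exfalso
      omega
  exact ⟨n - 1, by omega, Equiv.ofBijective f hbij, hbd', hcr', hcount⟩

/-- contracting a Hamiltonian edge of a mop of order at least 4
yields a mop. -/
theorem contract_hamEdge_isMop {V : Type*} (G : SimpleGraph V) (hG : IsMop G)
    (hn : 4 ≤ Nat.card V) (u v : V) (hham : IsHamEdge G u v) :
    IsMop (contractEdge G u v) := by
  obtain ⟨n, hn3, σ0, hw0, i, hiuv⟩ := hham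
  have hnn : Nat.card V = n := by
    rw [Nat.card_congr σ0.symm, Nat.card_eq_fintype_card, Fintype.card_fin]
  have hn4 : 4 ≤ n := hnn ▸ hn
  haveI : NeZero n := ⟨by omega⟩
  set t : Fin n := i - ⟨n - 2, by omega⟩ with htdef
  set σ : Fin n ≃ V := (Equiv.addRight t).trans σ0 with hσdef
  have hw : MopWitness G n σ := rot G n (by omega) σ0 hw0 t
  have hA : σ ⟨n - 2, by omega⟩ = σ0 i := by
    show σ0 ((⟨n - 2, by omega⟩ : Fin n) + t) = σ0 i
    congr 1
    rw [htdef]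
    abel
  have hB : σ ⟨n - 1, by omega⟩ = σ0 (finNext i) := by
    show σ0 ((⟨n - 1, by omega⟩ : Fin n) + t) = σ0 (finNext i)
    congr 1
    rw [htdef, finNext_eq_add_one (by omega),
      show (⟨n - 1, by omega⟩ : Fin n) = ⟨n - 2, by omega⟩ + 1 by
        apply Fin.ext
        rw [Fin.val_add]
        have h1 : (1 : Fin n).val = 1 := by
          rw [Fin.val_one']
          exact Nat.mod_eq_of_lt (by omega)
        rw [h1]
        show n - 1 = (n - 2 + 1) % n
        rw [Nat.mod_eq_of_lt (by omega)]
        omega]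
    abel
  refine main_aux G n hn4 σ hw u v ?_
  rcases hiuv with ⟨h1, h2⟩ | ⟨h1, h2⟩
  · exact Or.inl ⟨by rw [hA, h1], by rw [hB, h2]⟩
  · exact Or.inr ⟨by rw [hA, h1], by rw [hB, h2]⟩

end MopPaper
end

section
/- If k ≥ 0 and G is a maximal outerplanar graph of order n ≤ 2k+7, then the K_{1,k+1}-isolation number ι_k(G) is at most 1. -/
namespace MopPaper

theorem chordBound : ∀ N : ℕ, ∀ C : Finset (ℕ × ℕ),
    (∀ p ∈ C, p.1 + 2 ≤ p.2 ∧ p.2 ≤ N ∧ ¬(p.1 = 0 ∧ p.2 = N)) →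
    (∀ p ∈ C, ∀ q ∈ C, ¬(p.1 < q.1 ∧ q.1 < p.2 ∧ p.2 < q.2)) →
    C.card ≤ N - 2 := by
  intro N
  induction N using Nat.strong_induction_on with
  | _ N IH =>
    intro C hmem hcross
    rcases C.eq_empty_or_nonempty with rfl | hne
    · simp
    obtain ⟨⟨a, b⟩, habC, hmin⟩ := C.exists_min_image (fun p => p.2 - p.1) hne
    obtain ⟨hab2, hbN, hnotfull⟩ := hmem _ habC
    simp only at hab2 hbN hnotfull hmin
    -- N ≥ 3
    have hN3 : 3 ≤ N := by
      by_contra hN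
      push_neg at hN
      interval_cases N <;> omega
    -- no chord endpoint equals a+1
    have hnotend : ∀ p ∈ C, p.1 ≠ a + 1 ∧ p.2 ≠ a + 1 := by
      rintro ⟨c, d⟩ hcd
      obtain ⟨hcd2, hdN, -⟩ := hmem _ hcd
      have hminc := hmin _ hcd
      simp only at hcd2 hdN hminc ⊢
      constructor
      · rintro rfl
        -- c = a+1 ⇒ d ≥ b+1 ⇒ crossing (a,b),(c,d)
        have hd : b + 1 ≤ d := by omega
        exact hcross _ habC _ hcd ⟨by omega, by omega, by omega⟩
      · rintro rfl
        -- d = a+1 ⇒ c ≤ a-1 ⇒ crossing (c,d),(a,b)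
        have hc : c + 1 ≤ a := by omega
        exact hcross _ hcd _ habC ⟨by omega, by omega, by omega⟩
    -- the key fact: chords (c,d) with c ≤ a < a+1 < d satisfy d ≥ b
    have hcontain : ∀ p ∈ C, p.1 ≤ a → a + 2 ≤ p.2 → b ≤ p.2 := by
      rintro ⟨c, d⟩ hcd hca had
      simp only at hca had ⊢
      by_contra hdb
      push_neg at hdb
      have hminc := hmin _ hcd
      obtain ⟨hcd2, -, -⟩ := hmem _ hcd
      simp only at hminc hcd2
      rcases Nat.lt_or_ge c a with hc | hc
      · exact hcross _ hcd _ habC ⟨by omega, by omega, by omega⟩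
      · -- c = a, d < b contradicts minimality
        omega
    classical
    set φ : ℕ → ℕ := fun x => if x ≤ a then x else x - 1 with hφ
    have hφmono : ∀ x y, x ≤ y → φ x ≤ φ y := by
      intro x y hxy; simp only [hφ]; split <;> split <;> omega
    have hφlt : ∀ x y, x ≠ a + 1 → y ≠ a + 1 → φ x < φ y → x < y := by
      intro x y hx hy hlt
      by_contra hge
      push_neg at hge
      exact absurd (hφmono _ _ hge) (by omega)
    set C0 : Finset (ℕ × ℕ) := if b = a + 2 then C.erase (a, b) else C with hC0
    have hC0sub : C0 ⊆ C := by
      simp only [hC0]; split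
      · exact Finset.erase_subset _ _
      · exact subset_rfl
    set C' : Finset (ℕ × ℕ) := C0.image (fun p => (φ p.1, φ p.2)) with hC'
    have hcard0 : C'.card = C0.card := by
      apply Finset.card_image_of_injOn
      rintro ⟨c, d⟩ hcd ⟨e, f⟩ hef hcdef
      obtain ⟨hc1, hc2⟩ := hnotend _ (hC0sub hcd)
      obtain ⟨he1, he2⟩ := hnotend _ (hC0sub hef)
      simp only [Prod.mk.injEq, hφ] at hcdef hc1 hc2 he1 he2 ⊢
      obtain ⟨h1, h2⟩ := hcdef
      constructor
      · revert h1; split <;> split <;> omega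
      · revert h2; split <;> split <;> omega
    -- key structural fact for members of C0
    have hkey : ∀ p ∈ C0, φ p.1 + 2 ≤ φ p.2 ∧ φ p.2 ≤ N - 1 ∧ ¬(φ p.1 = 0 ∧ φ p.2 = N - 1) := by
      rintro ⟨c, d⟩ hcd
      have hcdC := hC0sub hcd
      obtain ⟨hcd2, hdN, hnf⟩ := hmem _ hcdC
      obtain ⟨hc1, hd1⟩ := hnotend _ hcdC
      simp only at hcd2 hdN hnf hc1 hd1 ⊢
      have hcase : d ≤ a ∨ (a + 2 ≤ c) ∨ (c ≤ a ∧ a + 2 ≤ d) := by omega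
      have hgap : φ c + 2 ≤ φ d := by
        rcases hcase with h | h | ⟨h1, h2⟩
        · simp only [hφ]; rw [if_pos (by omega), if_pos (by omega)]; omega
        · simp only [hφ]; rw [if_neg (by omega), if_neg (by omega)]; omega
        · have hdb : b ≤ d := hcontain _ hcdC h1 h2
          have h3 : c + 3 ≤ d := by
            rcases Nat.lt_or_ge c a with hc | hc
            · omega
            · -- c = a
              have hceq : c = a := by omega
              rcases Nat.eq_or_lt_of_le hdb with hde | hdl
              · -- d = b, so (c,d) = (a,b); if b = a+2 it was erased
                rcases eq_or_ne b (a + 2) with hb2 | hb2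
                · exfalso
                  have heq : (c, d) = (a, b) := by simp [hceq, hde.symm]
                  rw [heq] at hcd
                  simp only [hC0, if_pos hb2] at hcd
                  exact absurd rfl (Finset.ne_of_mem_erase hcd)
                · omega
              · omega
          simp only [hφ]; rw [if_pos h1, if_neg (by omega)]; omega
      refine ⟨hgap, ?_, ?_⟩
      · simp only [hφ]; split <;> omega
      · rintro ⟨hc0, hdN1⟩
        simp only [hφ] at hc0 hdN1
        have hc0' : c = 0 := by revert hc0; split <;> omega
        have hd0' : d = N := by revert hdN1; split <;> omega
        exact hnf ⟨hc0', hd0'⟩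
    have hcross' : ∀ p ∈ C', ∀ q ∈ C', ¬(p.1 < q.1 ∧ q.1 < p.2 ∧ p.2 < q.2) := by
      rintro p hp q hq ⟨h1, h2, h3⟩
      simp only [hC', Finset.mem_image] at hp hq
      obtain ⟨⟨c, d⟩, hcd, rfl⟩ := hp
      obtain ⟨⟨e, f⟩, hef, rfl⟩ := hq
      obtain ⟨hc1, hd1⟩ := hnotend _ (hC0sub hcd)
      obtain ⟨he1, hf1⟩ := hnotend _ (hC0sub hef)
      simp only at h1 h2 h3 hc1 hd1 he1 hf1
      exact hcross _ (hC0sub hcd) _ (hC0sub hef)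
        ⟨hφlt _ _ hc1 he1 h1, hφlt _ _ he1 hd1 h2, hφlt _ _ hd1 hf1 h3⟩
    have hmem' : ∀ p ∈ C', p.1 + 2 ≤ p.2 ∧ p.2 ≤ N - 1 ∧ ¬(p.1 = 0 ∧ p.2 = N - 1) := by
      intro p hp
      simp only [hC', Finset.mem_image] at hp
      obtain ⟨q, hq, rfl⟩ := hp
      exact hkey q hq
    have hIH := IH (N - 1) (by omega) C' hmem' hcross'
    have hC0card : C.card ≤ C0.card + 1 ∧ (b ≠ a + 2 → C.card = C0.card) := by
      simp only [hC0]
      split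
      · rw [Finset.card_erase_of_mem habC]
        constructor
        · omega
        · intro hb; omega
      · exact ⟨by omega, fun _ => rfl⟩
    rcases eq_or_ne b (a + 2) with hb | hb
    · omega
    · have := hC0card.2 hb
      omega


structure Poly (n : ℕ) (P : ℕ → ℕ → Prop) : Prop where
  n3 : 3 ≤ n
  symm : ∀ {i j}, P i j → P j i
  irrefl : ∀ i, ¬ P i i
  lt : ∀ {i j}, P i j → i < n ∧ j < n
  bnd1 : ∀ i, i + 1 < n → P i (i + 1)
  bnd2 : P 0 (n - 1)
  noncross : ∀ {a b c d}, P a b → P c d → a < c → c < b → b < d → False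
  maximal : ∀ u v, u < v → v < n → ¬ P u v →
    ∃ p q, P p q ∧ p < q ∧ ((p < u ∧ u < q ∧ q < v) ∨ (u < p ∧ p < v ∧ v < q))

/-- rotation of the boundary labelling by `t`. -/
def rotP (n : ℕ) (P : ℕ → ℕ → Prop) (t : ℕ) : ℕ → ℕ → Prop :=
  fun i j => i < n ∧ j < n ∧ P ((i + t) % n) ((j + t) % n)

theorem Poly.congr {n : ℕ} {P Q : ℕ → ℕ → Prop} (h : Poly n P)
    (e : ∀ i j, P i j ↔ Q i j) : Poly n Q where
  n3 := h.n3
  symm := fun hij => (e _ _).1 (h.symm ((e _ _).2 hij))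
  irrefl := fun i hi => h.irrefl i ((e _ _).2 hi)
  lt := fun hij => h.lt ((e _ _).2 hij)
  bnd1 := fun i hi => (e _ _).1 (h.bnd1 i hi)
  bnd2 := (e _ _).1 h.bnd2
  noncross := fun hab hcd => h.noncross ((e _ _).2 hab) ((e _ _).2 hcd)
  maximal := fun u v huv hv hnP => by
    obtain ⟨p, q, h1, h2, h3⟩ := h.maximal u v huv hv (fun hP => hnP ((e _ _).1 hP))
    exact ⟨p, q, (e _ _).1 h1, h2, h3⟩

theorem Poly.rot1 {n : ℕ} {P : ℕ → ℕ → Prop} (h : Poly n P) : Poly n (rotP n P 1) := by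
  have hn : 3 ≤ n := h.n3
  have hmod : ∀ i, i + 1 < n → (i + 1) % n = i + 1 := fun i hi => Nat.mod_eq_of_lt hi
  have hlast : (n - 1 + 1) % n = 0 := by
    rw [Nat.sub_add_cancel (by omega), Nat.mod_self]
  constructor
  · exact hn
  · rintro i j ⟨hi, hj, hP⟩; exact ⟨hj, hi, h.symm hP⟩
  · rintro i ⟨hi, -, hP⟩; exact h.irrefl _ hP
  · rintro i j ⟨hi, hj, -⟩; exact ⟨hi, hj⟩
  · -- bnd1
    intro i hi
    refine ⟨by omega, hi, ?_⟩
    rcases Nat.lt_or_ge (i + 1 + 1) n with h2 | h2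
    · rw [hmod i (by omega), hmod (i+1) h2]; exact h.bnd1 (i+1) h2
    · have hieq : i + 1 = n - 1 := by omega
      rw [hmod i (by omega), hieq, hlast]
      exact h.symm h.bnd2
  · -- bnd2
    refine ⟨by omega, by omega, ?_⟩
    rw [hlast, hmod 0 (by omega)]
    exact h.symm (h.bnd1 0 (by omega))
  · -- noncross
    rintro a b c d ⟨ha, hb, hab⟩ ⟨hc, hd, hcd⟩ h1 h2 h3
    -- a < c < b < d < n
    rcases Nat.lt_or_ge (d + 1) n with hd1 | hd1
    · -- no wrap
      rw [hmod a (by omega), hmod b (by omega)] at hab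
      rw [hmod c (by omega), hmod d hd1] at hcd
      exact h.noncross hab hcd (by omega) (by omega) (by omega)
    · -- d = n - 1 wraps to 0
      have hdeq : d = n - 1 := by omega
      rw [hmod a (by omega), hmod b (by omega)] at hab
      rw [hmod c (by omega), hdeq, hlast] at hcd
      -- edges (c+1, 0) i.e. (0, c+1) and (a+1, b+1); pattern 0 < a+1 < c+1 < b+1
      exact h.noncross (h.symm hcd) hab (by omega) (by omega) (by omega)
  · -- maximal
    intro u v huv hv hnP
    rcases Nat.lt_or_ge (v + 1) n with hv1 | hv1
    · -- no wrap: consider (u+1, v+1) in original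
      have hnP' : ¬ P (u + 1) (v + 1) := by
        intro hP
        exact hnP ⟨by omega, by omega, by rw [hmod u (by omega), hmod v hv1]; exact hP⟩
      obtain ⟨p, q, hPpq, hpq, hpat⟩ := h.maximal (u+1) (v+1) (by omega) hv1 hnP'
      have hqn : q < n := (h.lt hPpq).2
      rcases hpat with ⟨h1, h2, h3⟩ | ⟨h1, h2, h3⟩
      · -- p < u+1 < q < v+1
        rcases Nat.eq_zero_or_pos p with rfl | hp
        · -- edge (0, q) pulls back to (q-1, n-1); pattern u < q-1 < v < n-1
          refine ⟨q - 1, n - 1, ⟨by omega, by omega, ?_⟩, by omega, Or.inr ⟨by omega, by omega, by omega⟩⟩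
          have hq1 : q - 1 + 1 = q := by omega
          rw [hlast, hq1, Nat.mod_eq_of_lt hqn]
          exact h.symm hPpq
        · refine ⟨p - 1, q - 1, ⟨by omega, by omega, ?_⟩, by omega, Or.inl ⟨by omega, by omega, by omega⟩⟩
          have hp1 : p - 1 + 1 = p := by omega
          have hq1 : q - 1 + 1 = q := by omega
          rw [hp1, hq1, Nat.mod_eq_of_lt (h.lt hPpq).1, Nat.mod_eq_of_lt hqn]
          exact hPpq
      · -- u+1 < p < v+1 < q
        refine ⟨p - 1, q - 1, ⟨by omega, by omega, ?_⟩, by omega, Or.inr ⟨by omega, by omega, by omega⟩⟩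
        have hp1 : p - 1 + 1 = p := by omega
        have hq1 : q - 1 + 1 = q := by omega
        rw [hp1, hq1, Nat.mod_eq_of_lt (h.lt hPpq).1, Nat.mod_eq_of_lt hqn]
        exact hPpq
    · -- v = n-1: wraps to 0; u+1 ∈ [1, n-1]
      have hveq : v = n - 1 := by omega
      rcases Nat.lt_or_ge (u + 1) (n - 1) with hu1 | hu1
      · have hnP' : ¬ P 0 (u + 1) := by
          intro hP
          refine hnP ⟨by omega, by omega, ?_⟩
          rw [hmod u (by omega), hveq, hlast]
          exact h.symm hP
        obtain ⟨p, q, hPpq, hpq, hpat⟩ := h.maximal 0 (u+1) (by omega) (by omega) hnP'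
        have hqn : q < n := (h.lt hPpq).2
        rcases hpat with ⟨h1, -, -⟩ | ⟨h1, h2, h3⟩
        · omega
        · -- 0 < p < u+1 < q : pullback (p-1, q-1); pattern p-1 < u < q-1 < v
          refine ⟨p - 1, q - 1, ⟨by omega, by omega, ?_⟩, by omega, Or.inl ⟨by omega, by omega, by omega⟩⟩
          have hp1 : p - 1 + 1 = p := by omega
          have hq1 : q - 1 + 1 = q := by omega
          rw [hp1, hq1, Nat.mod_eq_of_lt (h.lt hPpq).1, Nat.mod_eq_of_lt hqn]
          exact hPpq
      · -- u + 1 = n - 1: pair (0, n-1) is adjacent, contradiction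
        exfalso
        apply hnP
        refine ⟨by omega, by omega, ?_⟩
        rw [hveq, hlast, hmod u (by omega)]
        have : u + 1 = n - 1 := by omega
        rw [this]
        exact h.symm h.bnd2


theorem Poly.rot {n : ℕ} {P : ℕ → ℕ → Prop} (h : Poly n P) (t : ℕ) :
    Poly n (rotP n P t) := by
  induction t with
  | zero =>
    refine h.congr fun i j => ?_
    unfold rotP
    constructor
    · intro hP
      obtain ⟨hi, hj⟩ := h.lt hP
      simp only [Nat.add_zero, Nat.mod_eq_of_lt hi, Nat.mod_eq_of_lt hj]
      exact ⟨hi, hj, hP⟩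
    · rintro ⟨hi, hj, hP⟩
      simp only [Nat.add_zero, Nat.mod_eq_of_lt hi, Nat.mod_eq_of_lt hj] at hP
      exact hP
  | succ t ih =>
    refine ih.rot1.congr fun i j => ?_
    unfold rotP
    have key : ∀ m : ℕ, ((m + 1) % n + t) % n = (m + (t + 1)) % n := by
      intro m
      rw [Nat.mod_add_mod, show m + 1 + t = m + (t + 1) by ring]
    have hn0 : 0 < n := by have := h.n3; omega
    constructor
    · rintro ⟨hi, hj, h1, h2, hP⟩
      exact ⟨hi, hj, by rwa [key i, key j] at hP⟩
    · rintro ⟨hi, hj, hP⟩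
      exact ⟨hi, hj, Nat.mod_lt _ hn0, Nat.mod_lt _ hn0, by rwa [key i, key j]⟩



theorem Poly.apex {n : ℕ} {P : ℕ → ℕ → Prop} (h : Poly n P) {x y : ℕ}
    (hxy : x + 2 ≤ y) (hy : y < n) (hP : P x y) :
    ∃ z, x < z ∧ z < y ∧ P x z ∧ P z y := by
  classical
  set s : Finset ℕ := (Finset.Ioo x y).filter (fun z => P x z) with hs
  have hne : s.Nonempty := by
    refine ⟨x + 1, ?_⟩
    simp only [hs, Finset.mem_filter, Finset.mem_Ioo]
    exact ⟨⟨by omega, by omega⟩, h.bnd1 x (by omega)⟩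
  obtain ⟨z, hzs, hzmax⟩ := s.exists_max_image id hne
  simp only [hs, Finset.mem_filter, Finset.mem_Ioo] at hzs
  obtain ⟨⟨hxz, hzy⟩, hPxz⟩ := hzs
  by_cases hPzy : P z y
  · exact ⟨z, hxz, hzy, hPxz, hPzy⟩
  exfalso
  have hzy1 : z + 1 < y := by
    rcases Nat.lt_or_ge (z + 1) y with h' | h'
    · exact h'
    · exact absurd (by have : z + 1 = y := by omega
                       rw [← this]; exact h.bnd1 z (by omega)) hPzy
  obtain ⟨p, q, hPpq, hpq, hpat⟩ := h.maximal z y (by omega) hy hPzy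
  rcases hpat with ⟨h1, h2, h3⟩ | ⟨h1, h2, h3⟩
  · -- p < z, z < q, q < y
    rcases Nat.lt_trichotomy p x with hpx | rfl | hpx
    · exact h.noncross hPpq hP hpx (by omega) (by omega)
    · -- q is a better neighbor than z
      have : q ∈ s := by
        simp only [hs, Finset.mem_filter, Finset.mem_Ioo]
        exact ⟨⟨by omega, h3⟩, hPpq⟩
      have := hzmax q this
      simp only [id] at this
      omega
    · exact h.noncross hPxz hPpq hpx h1 h2
  · -- z < p < y < q
    exact h.noncross hP hPpq (by omega) h2 h3



theorem Poly.key {n k : ℕ} {P : ℕ → ℕ → Prop} (h : Poly n P) (hn : n ≤ 2 * k + 7) :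
    ∃ t q r : ℕ, t < n ∧ 0 < q ∧ q < r ∧ r < n ∧
      rotP n P t 0 q ∧ rotP n P t q r ∧ rotP n P t 0 r ∧
      q - 1 ≤ k + 2 ∧ r - q - 1 ≤ k + 1 ∧ n - 1 - r ≤ k + 2 := by
  classical
  have hn3 : 3 ≤ n := h.n3
  set T : Finset (ℕ × ℕ × ℕ) :=
    (Finset.range n ×ˢ Finset.range n ×ˢ Finset.range n).filter
      (fun x => x.1 < x.2.1 ∧ x.2.1 < x.2.2 ∧ P x.1 x.2.1 ∧ P x.2.1 x.2.2 ∧ P x.1 x.2.2)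
    with hTdef
  have hmemT : ∀ x y z : ℕ, (x, y, z) ∈ T ↔
      (z < n ∧ x < y ∧ y < z ∧ P x y ∧ P y z ∧ P x z) := by
    intro x y z
    simp only [hTdef, Finset.mem_filter, Finset.mem_product, Finset.mem_range]
    constructor
    · rintro ⟨⟨-, -, h3⟩, h4, h5, h6, h7, h8⟩; exact ⟨h3, h4, h5, h6, h7, h8⟩
    · rintro ⟨h3, h4, h5, h6, h7, h8⟩; exact ⟨⟨by omega, by omega, h3⟩, h4, h5, h6, h7, h8⟩
  have hne : T.Nonempty := by
    obtain ⟨z, hz1, hz2, hz3, hz4⟩ := h.apex (x := 0) (y := n - 1) (by omega) (by omega) h.bnd2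
    exact ⟨(0, z, n - 1), (hmemT _ _ _).2 ⟨by omega, hz1, hz2, hz3, hz4, h.bnd2⟩⟩
  set M : ℕ × ℕ × ℕ → ℕ :=
    fun x => max (max (x.2.1 - x.1 - 1) (x.2.2 - x.2.1 - 1)) (n - 1 - x.2.2 + x.1) with hMdef
  obtain ⟨⟨a, b, c⟩, hTabc, hminM⟩ := T.exists_min_image M hne
  obtain ⟨hcn, hab, hbc, hPab, hPbc, hPac⟩ := (hmemT _ _ _).1 hTabc
  -- lower bounds on M (a,b,c)
  have hlb1 : b - a - 1 ≤ M (a, b, c) := le_trans (le_max_left _ _) (le_max_left _ _)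
  have hlb2 : c - b - 1 ≤ M (a, b, c) := le_trans (le_max_right _ _) (le_max_left _ _)
  have hlb3 : n - 1 - c + a ≤ M (a, b, c) := le_max_right _ _
  have hr1 : b - a - 1 ≤ k + 2 := by
    by_contra hcon
    push_neg at hcon
    obtain ⟨z, hz1, hz2, hz3, hz4⟩ := h.apex (x := a) (y := b) (by omega) (by omega) hPab
    have hmem : (a, z, b) ∈ T := (hmemT _ _ _).2 ⟨by omega, hz1, hz2, hz3, hz4, hPab⟩
    have hle := hminM _ hmem
    have hub : M (a, z, b) ≤ b - a - 2 := by
      simp only [hMdef]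
      refine max_le (max_le ?_ ?_) ?_ <;> omega
    omega
  have hr2 : c - b - 1 ≤ k + 2 := by
    by_contra hcon
    push_neg at hcon
    obtain ⟨z, hz1, hz2, hz3, hz4⟩ := h.apex (x := b) (y := c) (by omega) (by omega) hPbc
    have hmem : (b, z, c) ∈ T := (hmemT _ _ _).2 ⟨by omega, hz1, hz2, hz3, hz4, hPbc⟩
    have hle := hminM _ hmem
    have hub : M (b, z, c) ≤ c - b - 2 := by
      simp only [hMdef]
      refine max_le (max_le ?_ ?_) ?_ <;> omega
    omega
  have hr3 : n - 1 - c + a ≤ k + 2 := by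
    by_contra hcon
    push_neg at hcon
    have hQ : Poly n (rotP n P c) := h.rot c
    set y : ℕ := a + n - c with hy
    have hQ0y : rotP n P c 0 y := by
      refine ⟨by omega, by omega, ?_⟩
      have e1 : (0 + c) % n = c := by rw [Nat.zero_add, Nat.mod_eq_of_lt hcn]
      have e2 : (y + c) % n = a := by
        have : y + c = a + n := by omega
        rw [this, Nat.add_mod_right, Nat.mod_eq_of_lt (by omega)]
      rw [e1, e2]
      exact h.symm hPac
    obtain ⟨z', hz'1, hz'2, hQ1, hQ2⟩ := hQ.apex (x := 0) (y := y) (by omega) (by omega) hQ0y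
    obtain ⟨-, hz'n, hP1⟩ := hQ1
    obtain ⟨-, -, hP2⟩ := hQ2
    have e1 : (0 + c) % n = c := by rw [Nat.zero_add, Nat.mod_eq_of_lt hcn]
    have e2 : (y + c) % n = a := by
      have : y + c = a + n := by omega
      rw [this, Nat.add_mod_right, Nat.mod_eq_of_lt (by omega)]
    rw [e1] at hP1
    rw [e2] at hP2
    rcases Nat.lt_or_ge (z' + c) n with hwrap | hwrap
    · -- z = z' + c > c
      rw [Nat.mod_eq_of_lt hwrap] at hP1 hP2
      have hmem : (a, c, z' + c) ∈ T :=
        (hmemT _ _ _).2 ⟨hwrap, by omega, by omega, hPac, hP1, h.symm hP2⟩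
      have hle := hminM _ hmem
      have hub : M (a, c, z' + c) ≤ (n - 1 - c + a) - 1 := by
        simp only [hMdef]
        refine max_le (max_le ?_ ?_) ?_ <;> omega
      omega
    · -- z = z' + c - n < a
      have emod : (z' + c) % n = z' + c - n := by
        rw [Nat.mod_eq_sub_mod hwrap, Nat.mod_eq_of_lt (by omega)]
      rw [emod] at hP1 hP2
      have hmem : (z' + c - n, a, c) ∈ T :=
        (hmemT _ _ _).2 ⟨hcn, by omega, by omega, hP2, hPac, h.symm hP1⟩
      have hle := hminM _ hmem
      have hub : M (z' + c - n, a, c) ≤ (n - 1 - c + a) - 1 := by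
        simp only [hMdef]
        refine max_le (max_le ?_ ?_) ?_ <;> omega
      omega
  -- one of the three regions is at most k+1
  have hmin3 : b - a - 1 ≤ k + 1 ∨ c - b - 1 ≤ k + 1 ∨ n - 1 - c + a ≤ k + 1 := by omega
  have ea : (0 + a) % n = a := by rw [Nat.zero_add, Nat.mod_eq_of_lt (by omega)]
  have eb : (0 + b) % n = b := by rw [Nat.zero_add, Nat.mod_eq_of_lt (by omega)]
  have ec : (0 + c) % n = c := by rw [Nat.zero_add, Nat.mod_eq_of_lt hcn]
  rcases hmin3 with hm | hm | hm
  · -- r1 minimal: rotate by c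
    refine ⟨c, a + n - c, b + n - c, hcn, by omega, by omega, by omega, ?_, ?_, ?_, ?_, ?_, ?_⟩
    · refine ⟨by omega, by omega, ?_⟩
      have e2 : (a + n - c + c) % n = a := by
        rw [show a + n - c + c = a + n by omega, Nat.add_mod_right, Nat.mod_eq_of_lt (by omega)]
      rw [ec, e2]; exact h.symm hPac
    · refine ⟨by omega, by omega, ?_⟩
      have e2 : (a + n - c + c) % n = a := by
        rw [show a + n - c + c = a + n by omega, Nat.add_mod_right, Nat.mod_eq_of_lt (by omega)]
      have e3 : (b + n - c + c) % n = b := by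
        rw [show b + n - c + c = b + n by omega, Nat.add_mod_right, Nat.mod_eq_of_lt (by omega)]
      rw [e2, e3]; exact hPab
    · refine ⟨by omega, by omega, ?_⟩
      have e3 : (b + n - c + c) % n = b := by
        rw [show b + n - c + c = b + n by omega, Nat.add_mod_right, Nat.mod_eq_of_lt (by omega)]
      rw [ec, e3]; exact h.symm hPbc
    · omega
    · omega
    · omega
  · -- r2 minimal: rotate by a
    refine ⟨a, b - a, c - a, by omega, by omega, by omega, by omega, ?_, ?_, ?_, ?_, ?_, ?_⟩
    · refine ⟨by omega, by omega, ?_⟩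
      rw [ea, show (b - a + a) % n = b by rw [Nat.sub_add_cancel (by omega), Nat.mod_eq_of_lt (by omega)]]
      exact hPab
    · refine ⟨by omega, by omega, ?_⟩
      rw [show (b - a + a) % n = b by rw [Nat.sub_add_cancel (by omega), Nat.mod_eq_of_lt (by omega)],
        show (c - a + a) % n = c by rw [Nat.sub_add_cancel (by omega), Nat.mod_eq_of_lt hcn]]
      exact hPbc
    · refine ⟨by omega, by omega, ?_⟩
      rw [ea, show (c - a + a) % n = c by rw [Nat.sub_add_cancel (by omega), Nat.mod_eq_of_lt hcn]]
      exact hPac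
    · omega
    · omega
    · omega
  · -- r3 minimal: rotate by b
    refine ⟨b, c - b, a + n - b, by omega, by omega, by omega, by omega, ?_, ?_, ?_, ?_, ?_, ?_⟩
    · refine ⟨by omega, by omega, ?_⟩
      rw [eb, show (c - b + b) % n = c by rw [Nat.sub_add_cancel (by omega), Nat.mod_eq_of_lt hcn]]
      exact hPbc
    · refine ⟨by omega, by omega, ?_⟩
      rw [show (c - b + b) % n = c by rw [Nat.sub_add_cancel (by omega), Nat.mod_eq_of_lt hcn],
        show (a + n - b + b) % n = a by
          rw [show a + n - b + b = a + n by omega, Nat.add_mod_right, Nat.mod_eq_of_lt (by omega)]]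
      exact h.symm hPac
    · refine ⟨by omega, by omega, ?_⟩
      rw [eb, show (a + n - b + b) % n = a by
        rw [show a + n - b + b = a + n by omega, Nat.add_mod_right, Nat.mod_eq_of_lt (by omega)]]
      exact h.symm hPab
    · omega
    · omega
    · omega

theorem mopPoly {V : Type*} [Finite V] {G : SimpleGraph V} {n : ℕ} {σ : Fin n ≃ V}
    (h3 : 3 ≤ n) (hw : MopWitness G n σ) :
    Poly n (fun i j => ∃ (hi : i < n) (hj : j < n), G.Adj (σ ⟨i, hi⟩) (σ ⟨j, hj⟩)) := by
  classical
  have := Fintype.ofFinite V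
  obtain ⟨hbnd, hnc, hcount⟩ := hw
  have hbnd1 : ∀ i : ℕ, i + 1 < n → ∃ (hi : i < n) (hj : i + 1 < n),
      G.Adj (σ ⟨i, hi⟩) (σ ⟨i + 1, hj⟩) := by
    intro i hi
    refine ⟨by omega, hi, ?_⟩
    have h := hbnd ⟨i, by omega⟩
    have e : finNext (⟨i, by omega⟩ : Fin n) = ⟨i + 1, hi⟩ := by
      simp only [finNext, Fin.mk.injEq]
      exact Nat.mod_eq_of_lt hi
    rwa [e] at h
  have hbnd2 : ∃ (hi : (0:ℕ) < n) (hj : n - 1 < n),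
      G.Adj (σ ⟨0, hi⟩) (σ ⟨n - 1, hj⟩) := by
    refine ⟨by omega, by omega, ?_⟩
    have h := hbnd ⟨n - 1, by omega⟩
    have e : finNext (⟨n - 1, by omega⟩ : Fin n) = ⟨0, by omega⟩ := by
      simp only [finNext, Fin.mk.injEq]
      rw [Nat.sub_add_cancel (by omega), Nat.mod_self]
    rw [e] at h
    exact h.symm
  have hncN : ∀ a b c d : ℕ, ∀ (ha : a < n) (hb : b < n) (hc : c < n) (hd : d < n),
      G.Adj (σ ⟨a, ha⟩) (σ ⟨b, hb⟩) → G.Adj (σ ⟨c, hc⟩) (σ ⟨d, hd⟩) →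
      300 = 300 → a < c → c < b → b < d → False := by
    intro a b c d ha hb hc hd h1 h2 _ g1 g2 g3
    exact hnc ⟨a, ha⟩ ⟨b, hb⟩ ⟨c, hc⟩ ⟨d, hd⟩ h1 h2 ⟨g1, g2, g3⟩
  -- the chord counting for maximality
  set Flt : Finset (Fin n × Fin n) :=
    Finset.univ.filter (fun p => p.1 < p.2 ∧ G.Adj (σ p.1) (σ p.2)) with hFlt
  have hFcard : Flt.card = 2 * n - 3 := by
    have hbij : Flt.card = G.edgeSet.toFinset.card := by
      apply Finset.card_bij (fun p _ => s(σ p.1, σ p.2))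
      · rintro ⟨i, j⟩ hp
        simp only [hFlt, Finset.mem_filter, Finset.mem_univ, true_and] at hp
        simp only [Set.mem_toFinset, SimpleGraph.mem_edgeSet]
        exact hp.2
      · rintro ⟨i, j⟩ hp ⟨i', j'⟩ hp' heq
        simp only [hFlt, Finset.mem_filter, Finset.mem_univ, true_and] at hp hp'
        rw [Sym2.eq_iff] at heq
        rcases heq with ⟨e1, e2⟩ | ⟨e1, e2⟩
        · simp only at e1 e2
          exact Prod.ext (σ.injective e1) (σ.injective e2)
        · exfalso
          simp only at e1 e2
          have g1 := σ.injective e1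
          have g2 := σ.injective e2
          rw [g1, g2] at hp
          exact lt_irrefl _ (hp.1.trans hp'.1)
      · intro e he
        simp only [Set.mem_toFinset] at he
        induction e with
        | h x y =>
          rw [SimpleGraph.mem_edgeSet] at he
          have hxy : x ≠ y := he.ne
          rcases lt_trichotomy (σ.symm x) (σ.symm y) with hlt | heq | hlt
          · refine ⟨(σ.symm x, σ.symm y), ?_, ?_⟩
            · simp only [hFlt, Finset.mem_filter, Finset.mem_univ, true_and]
              simp only [Equiv.apply_symm_apply]
              exact ⟨hlt, he⟩
            · simp [Equiv.apply_symm_apply]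
          · exact absurd (σ.symm.injective heq) hxy
          · refine ⟨(σ.symm y, σ.symm x), ?_, ?_⟩
            · simp only [hFlt, Finset.mem_filter, Finset.mem_univ, true_and]
              simp only [Equiv.apply_symm_apply]
              exact ⟨hlt, he.symm⟩
            · simp [Equiv.apply_symm_apply, Sym2.eq_swap]
    rw [hbij, Set.toFinset_card, ← Nat.card_eq_fintype_card, hcount]
  set FN : Finset (ℕ × ℕ) := Flt.image (fun p => (p.1.val, p.2.val)) with hFN
  have hFNcard : FN.card = 2 * n - 3 := by
    rw [hFN, Finset.card_image_of_injOn, hFcard]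
    rintro ⟨i, j⟩ - ⟨i', j'⟩ - heq
    simp only [Prod.mk.injEq] at heq ⊢
    exact ⟨Fin.ext heq.1, Fin.ext heq.2⟩
  have hmemFN : ∀ x y : ℕ, (x, y) ∈ FN ↔
      ∃ (hx : x < n) (hy : y < n), x < y ∧ G.Adj (σ ⟨x, hx⟩) (σ ⟨y, hy⟩) := by
    intro x y
    simp only [hFN, Finset.mem_image, hFlt, Finset.mem_filter, Finset.mem_univ, true_and]
    constructor
    · rintro ⟨⟨i, j⟩, ⟨hlt, hadj⟩, heq⟩
      simp only [Prod.mk.injEq] at heq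
      obtain ⟨e1, e2⟩ := heq
      subst e1; subst e2
      exact ⟨i.isLt, j.isLt, hlt, hadj⟩
    · rintro ⟨hx, hy, hlt, hadj⟩
      exact ⟨(⟨x, hx⟩, ⟨y, hy⟩), ⟨hlt, hadj⟩, rfl⟩
  set B : Finset (ℕ × ℕ) :=
    ((Finset.range (n - 1)).image (fun i => (i, i + 1))) ∪ {(0, n - 1)} with hB
  have hBcard : B.card = n := by
    have hdisj : Disjoint ((Finset.range (n - 1)).image (fun i => (i, i + 1)))
        ({((0:ℕ), n - 1)} : Finset (ℕ × ℕ)) := by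
      simp only [Finset.disjoint_singleton_right, Finset.mem_image, Finset.mem_range]
      rintro ⟨i, hi, heq⟩
      simp only [Prod.mk.injEq] at heq
      omega
    have hinj : Set.InjOn (fun i => (i, i + 1)) (Finset.range (n - 1)) := by
      intro x _ y _ hxy
      exact congrArg Prod.fst hxy
    rw [hB, Finset.card_union_of_disjoint hdisj, Finset.card_image_of_injOn hinj,
      Finset.card_range, Finset.card_singleton]
    omega
  have hBsub : B ⊆ FN := by
    intro p hp
    simp only [hB, Finset.mem_union, Finset.mem_image, Finset.mem_range,
      Finset.mem_singleton] at hp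
    rcases hp with ⟨i, hi, rfl⟩ | rfl
    · obtain ⟨h1, h2, hadj⟩ := hbnd1 i (by omega)
      exact (hmemFN _ _).2 ⟨h1, h2, by omega, hadj⟩
    · obtain ⟨h1, h2, hadj⟩ := hbnd2
      exact (hmemFN _ _).2 ⟨h1, h2, by omega, hadj⟩
  set C : Finset (ℕ × ℕ) := FN \ B with hC
  have hCcard : C.card = n - 3 := by
    rw [hC, Finset.card_sdiff_of_subset hBsub, hFNcard, hBcard]
    omega
  constructor
  · exact h3
  · intro i j hP
    obtain ⟨hi, hj, hadj⟩ := hP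
    exact ⟨hj, hi, hadj.symm⟩
  · intro i hP
    obtain ⟨hi, hj, hadj⟩ := hP
    exact G.irrefl hadj
  · intro i j hP
    obtain ⟨hi, hj, hadj⟩ := hP
    exact ⟨hi, hj⟩
  · exact hbnd1
  · exact hbnd2
  · rintro a b c d ⟨ha, hb, h1⟩ ⟨hc, hd, h2⟩ g1 g2 g3
    exact hncN a b c d ha hb hc hd h1 h2 rfl g1 g2 g3
  · -- maximality
    intro u v huv hv hnuv
    by_contra hno
    -- add (u,v) to C and contradict chordBound
    have huv2 : u + 2 ≤ v := by
      rcases Nat.lt_or_ge (u + 1) v with h' | h'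
      · omega
      · exfalso
        have : v = u + 1 := by omega
        subst this
        exact hnuv (hbnd1 u hv)
    have hnotfull : ¬(u = 0 ∧ v = n - 1) := by
      rintro ⟨rfl, rfl⟩
      exact hnuv hbnd2
    have hmemC : ∀ p ∈ C, p.1 + 2 ≤ p.2 ∧ p.2 ≤ n - 1 ∧ ¬(p.1 = 0 ∧ p.2 = n - 1) ∧
        (∃ (h1 : p.1 < n) (h2 : p.2 < n), p.1 < p.2 ∧ G.Adj (σ ⟨p.1, h1⟩) (σ ⟨p.2, h2⟩)) := by
      rintro ⟨x, y⟩ hxy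
      simp only [hC, Finset.mem_sdiff] at hxy
      obtain ⟨hmem, hnB⟩ := hxy
      obtain ⟨hx, hy, hlt, hadj⟩ := (hmemFN _ _).1 hmem
      have hne1 : y ≠ x + 1 := by
        rintro rfl
        apply hnB
        simp only [hB, Finset.mem_union, Finset.mem_image, Finset.mem_range]
        exact Or.inl ⟨x, by omega, rfl⟩
      have hne2 : ¬(x = 0 ∧ y = n - 1) := by
        rintro ⟨rfl, rfl⟩
        apply hnB
        simp only [hB, Finset.mem_union, Finset.mem_singleton]
        exact Or.inr trivial
      exact ⟨by omega, by omega, hne2, hx, hy, hlt, hadj⟩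
    set C' : Finset (ℕ × ℕ) := insert (u, v) C with hC'
    have hC'card : C'.card = n - 2 := by
      rw [hC', Finset.card_insert_of_notMem, hCcard]
      · omega
      · intro hmem
        obtain ⟨-, -, -, h1, h2, -, hadj⟩ := hmemC _ hmem
        exact hnuv ⟨h1, h2, hadj⟩
    have hbound := chordBound (n - 1) C' ?_ ?_
    · omega
    · rintro ⟨x, y⟩ hxy
      simp only [hC', Finset.mem_insert] at hxy
      rcases hxy with heq | hmem
      · simp only [Prod.mk.injEq] at heq
        obtain ⟨rfl, rfl⟩ := heq
        exact ⟨huv2, by omega, hnotfull⟩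
      · obtain ⟨g1, g2, g3, -⟩ := hmemC _ hmem
        exact ⟨g1, g2, g3⟩
    · rintro ⟨x, y⟩ hxy ⟨x', y'⟩ hxy' ⟨g1, g2, g3⟩
      simp only [hC', Finset.mem_insert, Prod.mk.injEq] at hxy hxy'
      rcases hxy with ⟨rfl, rfl⟩ | hmem
      · rcases hxy' with ⟨rfl, rfl⟩ | hmem'
        · omega
        · -- (u,v) crosses a chord (x',y') : pattern u < x' < v < y'
          obtain ⟨-, -, -, h1, h2, hlt, hadj⟩ := hmemC _ hmem'
          exact hno ⟨x', y', ⟨h1, h2, hadj⟩, hlt, Or.inr ⟨g1, g2, g3⟩⟩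
      · rcases hxy' with ⟨rfl, rfl⟩ | hmem'
        · obtain ⟨-, -, -, h1, h2, hlt, hadj⟩ := hmemC _ hmem
          exact hno ⟨x, y, ⟨h1, h2, hadj⟩, hlt, Or.inl ⟨g1, g2, g3⟩⟩
        · obtain ⟨-, -, -, h1, h2, hlt, hadj⟩ := hmemC _ hmem
          obtain ⟨-, -, -, h1', h2', hlt', hadj'⟩ := hmemC _ hmem'
          exact hncN x y x' y' h1 h2 h1' h2' hadj hadj' rfl g1 g2 g3

set_option maxHeartbeats 1000000 in
/-- for `k ≥ 0` and a mop `G` of order `n ≤ 2k+7`, `ι_k(G) ≤ 1`. -/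
theorem iotaK_mop_le_one_of_small {V : Type*} [Finite V] (k : ℕ)
    (G : SimpleGraph V) (hG : IsMop G) (h : Nat.card V ≤ 2 * k + 7) :
    iotaK G k ≤ 1 := by
  classical
  obtain ⟨n, hn3, σ, hw⟩ := hG
  have hncard : Nat.card V = n := by
    rw [Nat.card_congr σ.symm, Nat.card_eq_fintype_card, Fintype.card_fin]
  rw [hncard] at h
  have hP : Poly n (fun i j => ∃ (hi : i < n) (hj : j < n),
      G.Adj (σ ⟨i, hi⟩) (σ ⟨j, hj⟩)) := mopPoly hn3 hw
  set P : ℕ → ℕ → Prop := fun i j => ∃ (hi : i < n) (hj : j < n),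
      G.Adj (σ ⟨i, hi⟩) (σ ⟨j, hj⟩) with hPdef
  obtain ⟨t, q, r, htn, hq0, hqr, hrn, hA1, hA2, hA3, hs1, hs2, hs3⟩ := hP.key h
  set P' : ℕ → ℕ → Prop := rotP n P t with hP'def
  have hQ : Poly n P' := hP.rot t
  haveI : NeZero n := ⟨by omega⟩
  set τ : Fin n ≃ V := (Equiv.addRight (⟨t, htn⟩ : Fin n)).trans σ with hτ
  have hadj : ∀ i j : Fin n, G.Adj (τ i) (τ j) ↔ P' i.val j.val := by
    intro i j
    have e : ∀ m : Fin n, τ m = σ ⟨(m.val + t) % n, Nat.mod_lt _ (by omega)⟩ := by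
      intro m
      simp only [hτ, Equiv.trans_apply, Equiv.coe_addRight]
      congr 1
    rw [e i, e j]
    constructor
    · intro hadj
      exact ⟨i.isLt, j.isLt, Nat.mod_lt _ (by omega), Nat.mod_lt _ (by omega), hadj⟩
    · intro hp
      obtain ⟨h1, h2, h3⟩ :=
        (hp : i.val < n ∧ j.val < n ∧ P ((i.val + t) % n) ((j.val + t) % n))
      obtain ⟨hx, hy, hadj⟩ := h3
      exact hadj
  set z : Fin n := ⟨0, by omega⟩ with hz
  set S : Set V := {τ z} with hS
  have hclosed : ∀ j : Fin n, τ j ∈ closedNbhd G S ↔ (j = z ∨ P' 0 j.val) := by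
    intro j
    simp only [closedNbhd, hS, Set.mem_union, Set.mem_singleton_iff, Set.mem_setOf_eq,
      exists_eq_left]
    constructor
    · rintro (hj | hj)
      · exact Or.inl (τ.injective hj)
      · exact Or.inr ((hadj z j).1 hj)
    · rintro (rfl | hPj)
      · exact Or.inl rfl
      · exact Or.inr ((hadj z j).2 hPj)
  have hiso : IsKIsolating G k S := by
    intro w hw
    set i : Fin n := τ.symm w with hi
    have hwi : w = τ i := (τ.apply_symm_apply w).symm
    rw [Set.mem_compl_iff] at hw
    rw [hwi] at hw
    rw [hclosed] at hw
    push_neg at hw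
    obtain ⟨hiz, hiP⟩ := hw
    have hI0 : i.val ≠ 0 := fun h0 => hiz (Fin.ext h0)
    have hIn : i.val < n := i.isLt
    have hI1 : i.val ≠ 1 := by
      intro h1
      exact hiP (by rw [h1]; exact hQ.bnd1 0 (by omega))
    have hIq : i.val ≠ q := fun h1 => hiP (by rw [h1]; exact hA1)
    have hIr : i.val ≠ r := fun h1 => hiP (by rw [h1]; exact hA3)
    have hIl : i.val ≠ n - 1 := fun h1 => hiP (by rw [h1]; exact hQ.bnd2)
    -- the target set of potential remaining neighbours
    set ff : ℕ → V := fun m => τ ⟨m % n, Nat.mod_lt _ (by omega)⟩ with hff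
    have hffj : ∀ j : Fin n, ff j.val = τ j := by
      intro j
      simp only [hff]
      congr 1
      exact Fin.ext (Nat.mod_eq_of_lt j.isLt)
    -- generic facts about a remaining neighbour w'
    have hnbr : ∀ w' ∈ G.neighborSet w ∩ (closedNbhd G S)ᶜ,
        ∃ j : Fin n, w' = τ j ∧ j.val ≠ 0 ∧ ¬ P' 0 j.val ∧ P' i.val j.val := by
      intro w' hw'
      obtain ⟨hadj', hw'c⟩ := hw'
      set j : Fin n := τ.symm w' with hj
      have hwj : w' = τ j := (τ.apply_symm_apply w').symm
      rw [Set.mem_compl_iff, hwj, hclosed] at hw'c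
      push_neg at hw'c
      obtain ⟨hjz, hjP⟩ := hw'c
      rw [SimpleGraph.mem_neighborSet, hwi, hwj, hadj] at hadj'
      exact ⟨j, hwj, fun h0 => hjz (Fin.ext h0), hjP, hadj'⟩
    have hbound : ∀ s : Finset ℕ,
        (∀ w' ∈ G.neighborSet w ∩ (closedNbhd G S)ᶜ, ∃ j : Fin n, w' = τ j ∧ j.val ∈ s) →
        (G.neighborSet w ∩ (closedNbhd G S)ᶜ).ncard ≤ s.card := by
      intro s hsub
      have h1 : (G.neighborSet w ∩ (closedNbhd G S)ᶜ) ⊆ ↑(s.image ff) := by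
        intro w' hw'
        obtain ⟨j, rfl, hjm⟩ := hsub w' hw'
        rw [Finset.coe_image]
        exact ⟨j.val, hjm, hffj j⟩
      calc (G.neighborSet w ∩ (closedNbhd G S)ᶜ).ncard
          ≤ (↑(s.image ff) : Set V).ncard :=
            Set.ncard_le_ncard h1 (Set.toFinite _)
        _ = (s.image ff).card := Set.ncard_coe_finset _
        _ ≤ s.card := Finset.card_image_le
    have hcase : (0 < i.val ∧ i.val < q) ∨ (q < i.val ∧ i.val < r) ∨
        (r < i.val ∧ i.val < n - 1) := by omega
    rcases hcase with ⟨hc1, hc2⟩ | ⟨hc1, hc2⟩ | ⟨hc1, hc2⟩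
    · -- region (0, q)
      have := hbound (((Finset.Ioo 0 q).erase 1).erase i.val) ?_
      · have hm1 : (1 : ℕ) ∈ Finset.Ioo 0 q := by
          simp only [Finset.mem_Ioo]; omega
        have hmi : i.val ∈ (Finset.Ioo 0 q).erase 1 := by
          simp only [Finset.mem_erase, Finset.mem_Ioo]
          exact ⟨hI1, by omega, hc2⟩
        rw [Finset.card_erase_of_mem hmi, Finset.card_erase_of_mem hm1, Nat.card_Ioo] at this
        omega
      · intro w' hw'
        obtain ⟨j, hwj, hj0, hjP, hjI⟩ := hnbr w' hw'
        refine ⟨j, hwj, ?_⟩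
        simp only [Finset.mem_erase, Finset.mem_Ioo]
        have hjn : j.val < n := j.isLt
        have hjne : j.val ≠ i.val := by
          intro heq
          rw [heq] at hjI
          exact hQ.irrefl _ hjI
        have hj1 : j.val ≠ 1 := by
          intro h1
          exact hjP (by rw [h1]; exact hQ.bnd1 0 (by omega))
        have hjq : j.val ≠ q := fun h1 => hjP (by rw [h1]; exact hA1)
        have hjltq : j.val < q := by
          rcases Nat.lt_or_ge j.val q with h' | h'
          · exact h'
          · exfalso
            have : q < j.val := by omega
            exact hQ.noncross hA1 hjI hc1 hc2 this
        exact ⟨hjne, hj1, by omega, hjltq⟩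
    · -- region (q, r)
      have := hbound ((Finset.Ioo q r).erase i.val) ?_
      · have hmi : i.val ∈ Finset.Ioo q r := by
          simp only [Finset.mem_Ioo]; exact ⟨hc1, hc2⟩
        rw [Finset.card_erase_of_mem hmi, Nat.card_Ioo] at this
        omega
      · intro w' hw'
        obtain ⟨j, hwj, hj0, hjP, hjI⟩ := hnbr w' hw'
        refine ⟨j, hwj, ?_⟩
        simp only [Finset.mem_erase, Finset.mem_Ioo]
        have hjne : j.val ≠ i.val := by
          intro heq
          rw [heq] at hjI
          exact hQ.irrefl _ hjI
        have hjq : j.val ≠ q := fun h1 => hjP (by rw [h1]; exact hA1)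
        have hjr : j.val ≠ r := fun h1 => hjP (by rw [h1]; exact hA3)
        have hjgtq : q < j.val := by
          rcases Nat.lt_or_ge q j.val with h' | h'
          · exact h'
          · exfalso
            have hlt : j.val < q := by omega
            exact hQ.noncross (hQ.symm hjI) hA2 hlt hc1 hc2
        have hjltr : j.val < r := by
          rcases Nat.lt_or_ge j.val r with h' | h'
          · exact h'
          · exfalso
            have hlt : r < j.val := by omega
            exact hQ.noncross hA2 hjI hc1 hc2 hlt
        exact ⟨hjne, hjgtq, hjltr⟩
    · -- region (r, n-1)
      have := hbound ((Finset.Ioo r (n - 1)).erase i.val) ?_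
      · have hmi : i.val ∈ Finset.Ioo r (n - 1) := by
          simp only [Finset.mem_Ioo]; exact ⟨hc1, hc2⟩
        rw [Finset.card_erase_of_mem hmi, Nat.card_Ioo] at this
        omega
      · intro w' hw'
        obtain ⟨j, hwj, hj0, hjP, hjI⟩ := hnbr w' hw'
        refine ⟨j, hwj, ?_⟩
        simp only [Finset.mem_erase, Finset.mem_Ioo]
        have hjn : j.val < n := j.isLt
        have hjne : j.val ≠ i.val := by
          intro heq
          rw [heq] at hjI
          exact hQ.irrefl _ hjI
        have hjr : j.val ≠ r := fun h1 => hjP (by rw [h1]; exact hA3)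
        have hjl : j.val ≠ n - 1 := fun h1 => hjP (by rw [h1]; exact hQ.bnd2)
        have hjgtr : r < j.val := by
          rcases Nat.lt_or_ge r j.val with h' | h'
          · exact h'
          · exfalso
            have hlt : j.val < r := by
              rcases Nat.lt_or_ge j.val r with h'' | h''
              · exact h''
              · omega
            have hj0' : 0 < j.val := by omega
            exact hQ.noncross hA3 (hQ.symm hjI) hj0' hlt hc1
        exact ⟨hjne, hjgtr, by omega⟩
  apply Nat.sInf_le
  exact ⟨S, Set.finite_singleton _, hiso, Set.ncard_singleton _⟩

end MopPaper
end
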